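/- arXiv:2002.08693 — 6 statements merged into one kernel-verified Lean document; each statement's English description precedes it below -/
import Mathlib

section
/- Let A₁,…,A_{d+1} be convex sets in ℝ^d with empty common intersection, such that every d of them have nonempty common intersection. Then for every hyperplane H' in ℝ^d, there exists an index j such that B_j := ⋂_{k≠j} A_k does not intersect H'. -/
/-- If `A₁, …, A_{d+1}` are convex sets in `ℝ^d` with empty common
intersection such that every `d` of them have a common point, then for every
hyperplane `H'` (given as `{x | ∑ j, w j * x j = c}` with `w ≠ 0`) there is an
index `j` such that `B j := ⋂_{k ≠ j} A k` is disjoint from `H'`. -/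
theorem exists_index_avoiding_hyperplane {d : ℕ}
    (A : Fin (d + 1) → Set (EuclideanSpace ℝ (Fin d)))
    (hconv : ∀ i, Convex ℝ (A i))
    (hempty : (⋂ i, A i) = ∅)
    (hdwise : ∀ j : Fin (d + 1), (⋂ k ∈ ({j}ᶜ : Set (Fin (d + 1))), A k).Nonempty)
    (w : Fin d → ℝ) (c : ℝ) (hw : w ≠ 0) :
    ∃ j : Fin (d + 1),
      (⋂ k ∈ ({j}ᶜ : Set (Fin (d + 1))), A k) ∩ {x | ∑ i, w i * x i = c} = ∅ := by
  classical
  by_contra hcon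
  push_neg at hcon
  -- each B_j meets the hyperplane
  have hmeet : ∀ j : Fin (d + 1), ∃ p : EuclideanSpace ℝ (Fin d),
      (∀ k, k ≠ j → p ∈ A k) ∧ ∑ i, w i * p i = c := by
    intro j
    obtain ⟨p, hp⟩ := hcon j
    refine ⟨p, ?_, hp.2⟩
    intro k hk
    have := hp.1
    rw [Set.mem_iInter₂] at this
    exact this k hk
  choose p hpA hpH using hmeet
  obtain ⟨i₀, hi₀⟩ : ∃ i, w i ≠ 0 := by
    by_contra h
    push_neg at h
    exact hw (funext fun i => h i)
  -- the linear functional defining the hyperplane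
  let f : EuclideanSpace ℝ (Fin d) →ₗ[ℝ] ℝ :=
    { toFun := fun x => ∑ i, w i * x i
      map_add' := by
        intro x y
        simp only [PiLp.add_apply, mul_add]
        exact Finset.sum_add_distrib
      map_smul' := by
        intro a x
        simp only [PiLp.smul_apply, smul_eq_mul, RingHom.id_apply, Finset.mul_sum]
        exact Finset.sum_congr rfl fun i _ => by ring }
  have hf_single : f (EuclideanSpace.single i₀ (1:ℝ)) = w i₀ := by
    simp [f, EuclideanSpace.single_apply]
  -- f is surjective
  have hsurj : Function.Surjective f := by
    intro y
    refine ⟨(y / w i₀) • EuclideanSpace.single i₀ (1:ℝ), ?_⟩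
    rw [map_smul, hf_single]
    rw [smul_eq_mul]
    field_simp
  have hrange : LinearMap.range f = ⊤ := LinearMap.range_eq_top.mpr hsurj
  have hrank : Module.finrank ℝ (LinearMap.ker f) + 1 = d := by
    have h1 := LinearMap.finrank_range_add_finrank_ker f
    rw [hrange] at h1
    simp only [finrank_top, Module.finrank_self] at h1
    have h2 : Module.finrank ℝ (EuclideanSpace ℝ (Fin d)) = d := by
      simp [finrank_euclideanSpace]
    omega
  obtain ⟨x₀, hx₀⟩ := hsurj c
  -- translated sets, living in the kernel of f
  let F : Fin (d + 1) → Set (LinearMap.ker f) :=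
    fun i => {v | (v : EuclideanSpace ℝ (Fin d)) + x₀ ∈ A i}
  have hFconv : ∀ i, Convex ℝ (F i) := by
    intro i v₁ h₁ v₂ h₂ a b ha hb hab
    have key : a • ((v₁ : EuclideanSpace ℝ (Fin d)) + x₀) + b • ((v₂ : EuclideanSpace ℝ (Fin d)) + x₀) ∈ A i :=
      hconv i h₁ h₂ ha hb hab
    have heq : a • ((v₁ : EuclideanSpace ℝ (Fin d)) + x₀) + b • ((v₂ : EuclideanSpace ℝ (Fin d)) + x₀)
        = ((a • v₁ + b • v₂ : LinearMap.ker f) : EuclideanSpace ℝ (Fin d)) + x₀ := by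
      push_cast
      rw [smul_add, smul_add]
      have : a • x₀ + b • x₀ = x₀ := by rw [← add_smul, hab, one_smul]
      rw [add_add_add_comm, this]
    show ((a • v₁ + b • v₂ : LinearMap.ker f) : EuclideanSpace ℝ (Fin d)) + x₀ ∈ A i
    rwa [heq] at key
  -- apply Helly's theorem in the (d-1)-dimensional kernel
  have hHelly := Convex.helly_theorem' (𝕜 := ℝ) (F := F) (s := Finset.univ)
    (fun i _ => hFconv i) ?_
  · obtain ⟨v, hv⟩ := hHelly
    rw [Set.mem_iInter₂] at hv
    have hmem : (v : EuclideanSpace ℝ (Fin d)) + x₀ ∈ ⋂ i, A i :=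
      Set.mem_iInter.mpr fun i => hv i (Finset.mem_univ i)
    rw [hempty] at hmem
    exact hmem
  · intro I _ hIcard
    rw [hrank] at hIcard
    have hIcard' : I.card < d + 1 := by omega
    obtain ⟨j, hj⟩ : ∃ j : Fin (d + 1), j ∉ I := by
      by_contra h
      push_neg at h
      have : I = Finset.univ := Finset.eq_univ_of_forall h
      rw [this, Finset.card_univ, Fintype.card_fin] at hIcard'
      omega
    have hker : p j - x₀ ∈ LinearMap.ker f := by
      rw [LinearMap.mem_ker, map_sub, hx₀]
      have hfp : f (p j) = c := hpH j
      rw [hfp, sub_self]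
    refine ⟨⟨p j - x₀, hker⟩, ?_⟩
    rw [Set.mem_iInter₂]
    intro i hi
    have hij : i ≠ j := fun h => hj (h ▸ hi)
    show (p j - x₀ : EuclideanSpace ℝ (Fin d)) + x₀ ∈ A i
    rw [sub_add_cancel]
    exact hpA j i hij
end

section
/- Let P be a set of n points in general position in ℝ^d (d ≥ 2) and let 0 < ε₁ ≤ ε₂ < 1 satisfy d·ε₁ + ε₂ ≥ d and ε₁ ≥ (2d−1)/(2d+1). Then there exist two points p₁, p₂ ∈ ℝ^d such that every convex set containing more than ε₁·n points of P contains at least one of p₁, p₂, and every convex set containing more than ε₂·n points of P contains both p₁ and p₂. -/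
/-- Number of points of the finite set `P` lying in the set `C`. -/
noncomputable def ptsIn {d : ℕ} (P : Finset (EuclideanSpace ℝ (Fin d)))
    (C : Set (EuclideanSpace ℝ (Fin d))) : ℕ :=
  ((P : Set (EuclideanSpace ℝ (Fin d))) ∩ C).ncard

/-- `P` is in general position: any `d+1` of its points are affinely independent. -/
def GeneralPosition {d : ℕ} (P : Finset (EuclideanSpace ℝ (Fin d))) : Prop :=
  ∀ S : Finset (EuclideanSpace ℝ (Fin d)), S ⊆ P → S.card = d + 1 →
    AffineIndependent ℝ (fun x : {x // x ∈ S} => (x : EuclideanSpace ℝ (Fin d)))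

open Finset Module
open scoped Classical RealInnerProductSpace

section Helpers

variable {d n : ℕ}

local notation "Ed" => EuclideanSpace ℝ (Fin d)

lemma exists_inner_ne_zero {d : ℕ} (T : Finset (EuclideanSpace ℝ (Fin d)))
    (hT : ∀ u ∈ T, u ≠ 0) :
    ∃ v : EuclideanSpace ℝ (Fin d), ∀ u ∈ T, ⟪v, u⟫ ≠ 0 := by
  classical
  induction T using Finset.induction_on with
  | empty => exact ⟨0, by simp⟩
  | @insert u T hu ih =>
    obtain ⟨v, hv⟩ := ih (fun x hx => hT x (mem_insert_of_mem hx))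
    have hu0 : u ≠ 0 := hT u (mem_insert_self u T)
    have huu : ⟪u, u⟫ ≠ 0 := fun h => hu0 (inner_self_eq_zero.mp h)
    set bad : Finset ℝ :=
      insert (-⟪v, u⟫ / ⟪u, u⟫) (T.image (fun u' => -⟪v, u'⟫ / ⟪u, u'⟫)) with hbad
    obtain ⟨t, ht⟩ := Infinite.exists_notMem_finset bad
    refine ⟨v + t • u, ?_⟩
    intro x hx
    have hexp : ⟪v + t • u, x⟫ = ⟪v, x⟫ + t * ⟪u, x⟫ := by
      rw [inner_add_left, real_inner_smul_left]
    rcases mem_insert.mp hx with rfl | hxT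
    · intro h
      rw [hexp] at h
      have htt : t = -⟪v, x⟫ / ⟪x, x⟫ := (eq_div_iff huu).mpr (by linear_combination h)
      exact ht (htt ▸ mem_insert_self _ _)
    · intro h
      rw [hexp] at h
      by_cases hux : ⟪u, x⟫ = 0
      · rw [hux] at h; simp at h; exact hv x hxT h
      · have htt : t = -⟪v, x⟫ / ⟪u, x⟫ := (eq_div_iff hux).mpr (by linear_combination h)
        exact ht (by rw [hbad, htt]; exact mem_insert_of_mem (mem_image_of_mem _ hxT))

lemma exists_inj_functional {d : ℕ} (P : Finset (EuclideanSpace ℝ (Fin d))) :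
    ∃ v : EuclideanSpace ℝ (Fin d), ∀ p ∈ P, ∀ q ∈ P, p ≠ q → ⟪v, p⟫ ≠ ⟪v, q⟫ := by
  classical
  have hT : ∀ u ∈ ((P ×ˢ P).filter (fun pq => pq.1 ≠ pq.2)).image (fun pq => pq.1 - pq.2),
      u ≠ 0 := by
    intro u hu
    obtain ⟨pq, hpq, rfl⟩ := mem_image.mp hu
    exact sub_ne_zero.mpr (mem_filter.mp hpq).2
  obtain ⟨v, hv⟩ := exists_inner_ne_zero _ hT
  refine ⟨v, fun p hp q hq hpq h => ?_⟩
  have hmem : (p, q) ∈ (P ×ˢ P).filter (fun pq => pq.1 ≠ pq.2) :=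
    mem_filter.mpr ⟨mem_product.mpr ⟨hp, hq⟩, hpq⟩
  have hne : ⟪v, p - q⟫ ≠ 0 := hv _ (mem_image_of_mem _ hmem)
  rw [inner_sub_right] at hne
  exact hne (sub_eq_zero.mpr h)

/-- Top-`a` subset with strictly dominating values. -/
lemma exists_top_subset {X : Type*} [DecidableEq X] (P : Finset X) (w : X → ℝ)
    (hw : ∀ p ∈ P, ∀ q ∈ P, p ≠ q → w p ≠ w q) (a : ℕ) (ha : a ≤ P.card) :
    ∃ A ⊆ P, A.card = a ∧ ∀ x ∈ A, ∀ y ∈ P \ A, w y < w x := by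
  classical
  induction a with
  | zero => exact ⟨∅, empty_subset _, rfl, by simp⟩
  | succ k ih =>
    obtain ⟨A, hAP, hAcard, hAdom⟩ := ih (Nat.le_of_succ_le ha)
    have hne : (P \ A).Nonempty := by
      rw [← Finset.card_pos, card_sdiff_of_subset hAP]
      omega
    obtain ⟨y₀, hy₀, hy₀max⟩ := Finset.exists_max_image (P \ A) w hne
    refine ⟨insert y₀ A, ?_, ?_, ?_⟩
    · exact insert_subset (mem_sdiff.mp hy₀).1 hAP
    · rw [card_insert_of_notMem (mem_sdiff.mp hy₀).2, hAcard]
    · intro x hx y hy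
      have hyPA : y ∈ P \ A := by
        rw [mem_sdiff] at hy ⊢
        exact ⟨hy.1, fun h => hy.2 (mem_insert_of_mem h)⟩
      have hyne : y ≠ y₀ := fun h => (mem_sdiff.mp hy).2 (h ▸ mem_insert_self _ _)
      rcases mem_insert.mp hx with rfl | hxA
      · exact lt_of_le_of_ne (hy₀max y hyPA)
          (hw y (mem_sdiff.mp hyPA).1 x (mem_sdiff.mp hy₀).1 hyne)
      · exact hAdom x hxA y hyPA

/-- A cut value realizing exactly `a` points strictly above, no point on the cut. -/
lemma exists_cut {X : Type*} [DecidableEq X] (P : Finset X) (w : X → ℝ)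
    (hw : ∀ p ∈ P, ∀ q ∈ P, p ≠ q → w p ≠ w q) (a : ℕ) (ha1 : 1 ≤ a) (ha2 : a < P.card) :
    ∃ c : ℝ, (∀ p ∈ P, w p ≠ c) ∧ (P.filter (fun p => c < w p)).card = a := by
  classical
  obtain ⟨A, hAP, hAcard, hAdom⟩ := exists_top_subset P w hw a (le_of_lt ha2)
  have hAne : A.Nonempty := card_pos.mp (by omega)
  have hBne : (P \ A).Nonempty := by
    rw [← Finset.card_pos, card_sdiff_of_subset hAP]; omega
  obtain ⟨x₀, hx₀, hx₀min⟩ := Finset.exists_min_image A w hAne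
  obtain ⟨y₀, hy₀, hy₀max⟩ := Finset.exists_max_image (P \ A) w hBne
  have hlt : w y₀ < w x₀ := hAdom x₀ hx₀ y₀ hy₀
  set c := (w x₀ + w y₀) / 2 with hc
  have hcx : c < w x₀ := by rw [hc]; linarith
  have hyc : w y₀ < c := by rw [hc]; linarith
  have hfilter : P.filter (fun p => c < w p) = A := by
    ext p
    simp only [mem_filter]
    constructor
    · rintro ⟨hpP, hpc⟩
      by_contra hpA
      have : p ∈ P \ A := mem_sdiff.mpr ⟨hpP, hpA⟩
      exact absurd (lt_of_le_of_lt (hy₀max p this) hyc) (not_lt.mpr (le_of_lt hpc))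
    · intro hpA
      exact ⟨hAP hpA, lt_of_lt_of_le hcx (hx₀min p hpA)⟩
  refine ⟨c, ?_, by rw [hfilter, hAcard]⟩
  intro p hp
  by_cases hpA : p ∈ A
  · exact ne_of_gt (lt_of_lt_of_le hcx (hx₀min p hpA))
  · exact ne_of_lt (lt_of_le_of_lt (hy₀max p (mem_sdiff.mpr ⟨hp, hpA⟩)) hyc)

lemma count_common {X : Type*} [DecidableEq X] (P : Finset X) (I : Finset (Finset X))
    (hsub : ∀ S ∈ I, S ⊆ P)
    (hsum : ∑ S ∈ I, (P.card - S.card) < P.card) :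
    ∃ p ∈ P, ∀ S ∈ I, p ∈ S := by
  classical
  set U := I.biUnion (fun S => P \ S) with hU
  have hUcard : U.card < P.card := by
    calc U.card ≤ ∑ S ∈ I, (P \ S).card := card_biUnion_le
    _ = ∑ S ∈ I, (P.card - S.card) := by
        apply Finset.sum_congr rfl
        intro S hS
        rw [card_sdiff_of_subset (hsub S hS)]
    _ < P.card := hsum
  have hne : (P \ U).Nonempty := by
    rw [← Finset.card_pos]
    have hUP : U ⊆ P := by
      intro x hx
      obtain ⟨S, _, hxS⟩ := mem_biUnion.mp hx
      exact (mem_sdiff.mp hxS).1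
    rw [card_sdiff_of_subset hUP]
    omega
  obtain ⟨p, hp⟩ := hne
  rw [mem_sdiff] at hp
  refine ⟨p, hp.1, fun S hS => ?_⟩
  by_contra hpS
  exact hp.2 (mem_biUnion.mpr ⟨S, hS, mem_sdiff.mpr ⟨hp.1, hpS⟩⟩)

lemma key_lemma (hd : 2 ≤ d)
    (P : Finset (EuclideanSpace ℝ (Fin d))) (hP : P.card = n)
    (w : EuclideanSpace ℝ (Fin d) →ₗ[ℝ] ℝ) (hw0 : w ≠ 0) (c : ℝ)
    (hcut : ∀ p ∈ P, w p ≠ c)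
    (X : Finset (EuclideanSpace ℝ (Fin d))) (hX : X = P.filter (fun p => c < w p))
    (E₁ θ : ℕ) (hE₁ : E₁ ≤ n)
    (hθa : (2 * d + 1) * θ + 1 ≤ 2 * X.card)
    (hθL : d * (n - E₁) + θ + 1 ≤ n)
    (I : Finset (Finset (EuclideanSpace ℝ (Fin d)))) (hIcard : I.card = d + 1)
    (hIsub : ∀ S ∈ I, S ⊆ P) (hIE : ∀ S ∈ I, E₁ ≤ S.card)
    (hIdef : ∀ S ∈ I, (X \ S).card ≤ θ) :
    (⋂ S ∈ I, convexHull ℝ (S : Set (EuclideanSpace ℝ (Fin d)))).Nonempty := by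
  classical
  by_contra hempty
  -- no common point of all hulls
  have hno : ∀ x : Ed, ¬ ∀ S ∈ I, x ∈ convexHull ℝ (S : Set Ed) := by
    intro x hx
    exact hempty ⟨x, Set.mem_iInter₂.mpr (fun S hS => hx S hS)⟩
  have hnoP : ∀ p : Ed, ¬ ∀ S ∈ I, p ∈ S := by
    intro p hp
    exact hno p (fun S hS => subset_convexHull ℝ _ (hp S hS))
  -- the "drop one" blocks
  set Q : Finset Ed → Finset Ed :=
    fun S => P.filter (fun p => ∀ T ∈ I.erase S, p ∈ T) with hQ
  have hQP : ∀ S, Q S ⊆ P := fun S => filter_subset _ _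
  have hQmem : ∀ S, ∀ T ∈ I.erase S, ∀ p ∈ Q S, p ∈ T := by
    intro S T hT p hp
    exact (mem_filter.mp hp).2 T hT
  have hQcard : ∀ S ∈ I, n - d * (n - E₁) ≤ (Q S).card := by
    intro S hS
    have hsub2 : P \ Q S ⊆ (I.erase S).biUnion (fun T => P \ T) := by
      intro p hp
      rw [mem_sdiff] at hp
      have : ¬ ∀ T ∈ I.erase S, p ∈ T := by
        intro hall
        exact hp.2 (mem_filter.mpr ⟨hp.1, hall⟩)
      push_neg at this
      obtain ⟨T, hT, hpT⟩ := this
      exact mem_biUnion.mpr ⟨T, hT, mem_sdiff.mpr ⟨hp.1, hpT⟩⟩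
    have hbound : (P \ Q S).card ≤ d * (n - E₁) := by
      calc (P \ Q S).card ≤ ((I.erase S).biUnion (fun T => P \ T)).card := card_le_card hsub2
      _ ≤ ∑ T ∈ I.erase S, (P \ T).card := card_biUnion_le
      _ ≤ ∑ T ∈ I.erase S, (n - E₁) := by
          apply Finset.sum_le_sum
          intro T hT
          rw [card_sdiff_of_subset (hIsub T (mem_of_mem_erase hT)), hP]
          exact Nat.sub_le_sub_left (hIE T (mem_of_mem_erase hT)) n
      _ = (I.erase S).card * (n - E₁) := by rw [Finset.sum_const, smul_eq_mul]
      _ = d * (n - E₁) := by rw [card_erase_of_mem hS, hIcard]; simp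
    have := card_sdiff_of_subset (hQP S)
    omega
  -- points of X in a block are missed by the block's owner
  have hQX : ∀ S ∈ I, X ∩ Q S ⊆ X \ S := by
    intro S hS p hp
    rw [mem_inter] at hp
    rw [mem_sdiff]
    refine ⟨hp.1, fun hpS => ?_⟩
    apply hnoP p
    intro T hT
    by_cases hTS : T = S
    · exact hTS ▸ hpS
    · exact hQmem S T (mem_erase.mpr ⟨hTS, hT⟩) p hp.2
  -- the kernel subspace
  have hrankV : finrank ℝ (LinearMap.ker w) = d - 1 := by
    have h1 := LinearMap.finrank_range_add_finrank_ker w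
    have h2 : LinearMap.range w = ⊤ := by
      obtain ⟨x₀, hx₀⟩ : ∃ x₀, w x₀ ≠ 0 := by
        by_contra hcon
        push_neg at hcon
        exact hw0 (LinearMap.ext (fun x => by rw [hcon x]; rfl))
      rw [LinearMap.range_eq_top]
      intro r
      exact ⟨(r / w x₀) • x₀, by rw [map_smul, smul_eq_mul, div_mul_cancel₀ _ hx₀]⟩
    rw [h2] at h1
    simp only [finrank_top, finrank_self, finrank_euclideanSpace_fin] at h1
    omega
  obtain ⟨x₀, hx₀⟩ : ∃ x₀, w x₀ ≠ 0 := by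
    by_contra hcon
    push_neg at hcon
    exact hw0 (LinearMap.ext (fun x => by rw [hcon x]; rfl))
  set u : Ed := (w x₀)⁻¹ • x₀ with hu
  have hwu : w u = 1 := by rw [hu, map_smul, smul_eq_mul, inv_mul_cancel₀ hx₀]
  -- affine parametrization of the hyperplane {w = c}
  set f : LinearMap.ker w → Ed := fun y => (y : Ed) + c • u with hf
  have hwf : ∀ y : LinearMap.ker w, w (f y) = c := by
    intro y
    rw [hf]
    simp only [map_add, map_smul, smul_eq_mul, hwu, mul_one]
    rw [LinearMap.mem_ker.mp y.2, zero_add]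
  set F : (LinearMap.ker w) →ᵃ[ℝ] Ed := AffineMap.mk' f ((LinearMap.ker w).subtype) 0 (by
    intro p
    simp [hf]) with hF
  set K : Finset Ed → Set (LinearMap.ker w) := fun S => f ⁻¹' (convexHull ℝ (S : Set Ed)) with hK
  have hKconv : ∀ S, Convex ℝ (K S) := by
    intro S
    have : K S = F ⁻¹' (convexHull ℝ (S : Set Ed)) := rfl
    rw [this]
    exact (convex_convexHull ℝ _).affine_preimage F
  -- some erase-one subfamily has hull-intersection missing the hyperplane
  have hmain : ∃ S₀ ∈ I,
      ∀ x : Ed, x ∈ (⋂ T ∈ I.erase S₀, convexHull ℝ (T : Set Ed)) → w x ≠ c := by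
    by_contra hcon
    push_neg at hcon
    have hinter : ∀ J ⊆ I, J.card ≤ finrank ℝ (LinearMap.ker w) + 1 → (⋂ S ∈ J, K S).Nonempty := by
      intro J hJ hJcard
      have hJlt : J.card < I.card := by
        rw [hIcard]
        rw [hrankV] at hJcard
        omega
      obtain ⟨S₀, hS₀I, hS₀J⟩ : ∃ S₀ ∈ I, S₀ ∉ J := by
        by_contra hcon2
        push_neg at hcon2
        have := card_le_card (fun x hx => hcon2 x hx : I ⊆ J)
        omega
      obtain ⟨x, hxW, hxc⟩ := hcon S₀ hS₀I
      have hxV : x - c • u ∈ LinearMap.ker w := by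
        rw [LinearMap.mem_ker, map_sub, map_smul, smul_eq_mul, hwu, mul_one, hxc, sub_self]
      refine ⟨⟨x - c • u, hxV⟩, Set.mem_iInter₂.mpr (fun S hS => ?_)⟩
      have hfx : f ⟨x - c • u, hxV⟩ = x := by
        rw [hf]
        simp
      rw [hK]
      simp only [Set.mem_preimage, hfx]
      have hSerase : S ∈ I.erase S₀ :=
        mem_erase.mpr ⟨fun h => hS₀J (h ▸ hS), hJ hS⟩
      exact Set.mem_iInter₂.mp hxW S hSerase
    obtain ⟨y, hy⟩ := Convex.helly_theorem' (𝕜 := ℝ) (E := LinearMap.ker w) (F := K) (s := I)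
      (fun S _ => hKconv S) hinter
    apply hno (f y)
    intro S hS
    exact Set.mem_iInter₂.mp hy S hS
  obtain ⟨S₀, hS₀I, hW⟩ := hmain
  -- points of the block Q S₀ lie in that intersection
  have hQW : ∀ p ∈ Q S₀, (p : Ed) ∈ ⋂ T ∈ I.erase S₀, convexHull ℝ (T : Set Ed) := by
    intro p hp
    exact Set.mem_iInter₂.mpr
      (fun T hT => subset_convexHull ℝ _ (hQmem S₀ T hT p hp))
  -- the block lies strictly on one side
  have hside : (∀ p ∈ Q S₀, c < w p) ∨ (∀ p ∈ Q S₀, w p < c) := by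
    by_contra hcon
    push_neg at hcon
    obtain ⟨⟨x, hxQ, hxc⟩, ⟨y, hyQ, hyc⟩⟩ := hcon
    have hxlt : w x < c := lt_of_le_of_ne hxc (hcut x (hQP S₀ hxQ))
    have hylt : c < w y := lt_of_le_of_ne hyc (fun h => hcut y (hQP S₀ hyQ) h.symm)
    set t : ℝ := (c - w x) / (w y - w x) with ht
    have hden : 0 < w y - w x := by linarith
    have ht0 : 0 ≤ t := div_nonneg (by linarith) (le_of_lt hden)
    have ht1 : t ≤ 1 := by
      rw [ht, div_le_one hden]
      linarith
    set z : Ed := (1 - t) • (x : Ed) + t • y with hz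
    have hzW : z ∈ ⋂ T ∈ I.erase S₀, convexHull ℝ (T : Set Ed) := by
      apply Set.mem_iInter₂.mpr
      intro T hT
      exact (convex_convexHull ℝ _)
        (Set.mem_iInter₂.mp (hQW x hxQ) T hT)
        (Set.mem_iInter₂.mp (hQW y hyQ) T hT)
        (by linarith) ht0 (by ring)
    apply hW z hzW
    rw [hz, map_add, map_smul, map_smul, smul_eq_mul, smul_eq_mul, ht]
    field_simp
    ring
  rcases hside with habove | hbelow
  · -- block above: its owner misses too much of X
    have hQsubX : Q S₀ ⊆ X := by
      intro p hp
      rw [hX, mem_filter]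
      exact ⟨hQP S₀ hp, habove p hp⟩
    have h1 : (X \ S₀).card ≥ (Q S₀).card := by
      apply card_le_card
      intro p hp
      exact hQX S₀ hS₀I (mem_inter.mpr ⟨hQsubX hp, hp⟩)
    have h2 := hQcard S₀ hS₀I
    have h3 := hIdef S₀ hS₀I
    omega
  · -- block below: the double-counting cascade
    have hQX0 : X ∩ Q S₀ = ∅ := by
      rw [eq_empty_iff_forall_notMem]
      intro p hp
      rw [mem_inter] at hp
      have h1 : c < w p := by
        have hh := hp.1
        rw [hX, mem_filter] at hh
        exact hh.2
      exact absurd (hbelow p hp.2) (not_lt.mpr (le_of_lt h1))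
    -- multiplicity bound
    have hXP : X ⊆ P := by rw [hX]; exact filter_subset _ _
    have hmult : ∀ p ∈ X, (I.filter (fun S => p ∈ S)).card ≤ (d - 1) +
        (if p ∈ I.biUnion (fun S => X ∩ Q S) then 1 else 0) := by
      intro p hpX
      set m := (I.filter (fun S => p ∈ S)).card with hm
      have hmle : m ≤ d + 1 := hIcard ▸ card_le_card (filter_subset _ _)
      have hmd : m ≤ d := by
        rcases Nat.lt_or_ge m (d + 1) with h | h
        · omega
        · exfalso
          have heq : I.filter (fun S => p ∈ S) = I :=
            eq_of_subset_of_card_le (filter_subset _ _) (by omega)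
          apply hnoP p
          intro S hS
          have hmem2 : S ∈ I.filter (fun S => p ∈ S) := by rw [heq]; exact hS
          exact (mem_filter.mp hmem2).2
      rcases Nat.lt_or_ge m d with h | h
      · split <;> omega
      · -- m = d : p belongs to some block
        have hmd2 : m = d := le_antisymm hmd h
        have hdiff : (I \ I.filter (fun S => p ∈ S)).card = 1 := by
          rw [card_sdiff_of_subset (filter_subset _ _), hIcard, ← hm, hmd2]
          omega
        obtain ⟨Sm, hSm⟩ := card_eq_one.mp hdiff
        have hSmI : Sm ∈ I := by
          have : Sm ∈ I \ I.filter (fun S => p ∈ S) := hSm ▸ mem_singleton_self Sm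
          exact (mem_sdiff.mp this).1
        have hfe : I.filter (fun S => p ∈ S) = I.erase Sm := by
          apply eq_of_subset_of_card_le
          · intro T hT
            rw [mem_filter] at hT
            refine mem_erase.mpr ⟨fun hTS => ?_, hT.1⟩
            have hSmd : Sm ∈ I \ I.filter (fun S => p ∈ S) := hSm ▸ mem_singleton_self Sm
            rw [mem_sdiff] at hSmd
            exact hSmd.2 (hTS ▸ mem_filter.mpr hT)
          · rw [card_erase_of_mem hSmI, hIcard, ← hm, hmd2]
            omega
        have hpQ : p ∈ Q Sm := by
          rw [hQ]
          refine mem_filter.mpr ⟨hXP hpX, fun T hT => ?_⟩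
          have : T ∈ I.filter (fun S => p ∈ S) := hfe ▸ hT
          exact (mem_filter.mp this).2
        have hbi : p ∈ I.biUnion (fun S => X ∩ Q S) :=
          mem_biUnion.mpr ⟨Sm, hSmI, mem_inter.mpr ⟨hpX, hpQ⟩⟩
        rw [if_pos hbi]
        omega
    -- the double counting cascade
    have hsum1 : (d + 1) * X.card ≤ (∑ S ∈ I, (X ∩ S).card) + (d + 1) * θ := by
      calc (d + 1) * X.card = ∑ _S ∈ I, X.card := by
            rw [sum_const, hIcard, smul_eq_mul]
      _ ≤ ∑ S ∈ I, ((X ∩ S).card + θ) := by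
          apply sum_le_sum
          intro S hS
          have h1 := card_inter_add_card_sdiff X S
          have h2 := hIdef S hS
          omega
      _ = (∑ S ∈ I, (X ∩ S).card) + (d + 1) * θ := by
          rw [sum_add_distrib, sum_const, hIcard, smul_eq_mul]
    have hswap : ∑ S ∈ I, (X ∩ S).card = ∑ p ∈ X, (I.filter (fun S => p ∈ S)).card := by
      have h1 : ∀ S, (X ∩ S).card = ∑ p ∈ X, (if p ∈ S then 1 else 0) := by
        intro S
        rw [← Finset.sum_filter, ← Finset.card_eq_sum_ones, Finset.filter_mem_eq_inter]
      have h2 : ∀ p, (I.filter (fun S => p ∈ S)).card = ∑ S ∈ I, (if p ∈ S then 1 else 0) := by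
        intro p
        rw [← Finset.sum_filter, ← Finset.card_eq_sum_ones]
      simp only [h1, h2]
      exact Finset.sum_comm
    have hsum2 : ∑ p ∈ X, (I.filter (fun S => p ∈ S)).card ≤
        (d - 1) * X.card + ∑ S ∈ I, (X ∩ Q S).card := by
      calc ∑ p ∈ X, (I.filter (fun S => p ∈ S)).card
          ≤ ∑ p ∈ X, ((d - 1) + (if p ∈ I.biUnion (fun S => X ∩ Q S) then 1 else 0)) :=
            sum_le_sum hmult
      _ = (d - 1) * X.card + ∑ p ∈ X, (if p ∈ I.biUnion (fun S => X ∩ Q S) then 1 else 0) := by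
          rw [sum_add_distrib, sum_const, smul_eq_mul]
          ring
      _ ≤ (d - 1) * X.card + (I.biUnion (fun S => X ∩ Q S)).card := by
          apply add_le_add_right
          rw [← Finset.sum_filter, ← Finset.card_eq_sum_ones]
          apply card_le_card
          intro p hp
          exact (mem_filter.mp hp).2
      _ ≤ (d - 1) * X.card + ∑ S ∈ I, (X ∩ Q S).card :=
          add_le_add_right card_biUnion_le _
    have hsum3 : ∑ S ∈ I, (X ∩ Q S).card ≤ d * θ := by
      have hsplit : ∑ S ∈ I, (X ∩ Q S).card
          = (X ∩ Q S₀).card + ∑ S ∈ I.erase S₀, (X ∩ Q S).card :=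
        (Finset.add_sum_erase _ _ hS₀I).symm
      rw [hsplit, hQX0, card_empty, zero_add]
      calc ∑ S ∈ I.erase S₀, (X ∩ Q S).card ≤ ∑ _S ∈ I.erase S₀, θ := by
            apply sum_le_sum
            intro S hS
            exact le_trans (card_le_card (hQX S (mem_of_mem_erase hS)))
              (hIdef S (mem_of_mem_erase hS))
      _ = d * θ := by
          rw [sum_const, card_erase_of_mem hS₀I, hIcard, smul_eq_mul]
          simp
    rw [hswap] at hsum1
    have e1 : (d + 1) * X.card = (d - 1) * X.card + 2 * X.card := by
      have h : d + 1 = (d - 1) + 2 := by omega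
      rw [h, add_mul]
    have e2 : (2 * d + 1) * θ = d * θ + (d + 1) * θ := by
      have h : 2 * d + 1 = d + (d + 1) := by omega
      rw [h, add_mul]
    omega

lemma core (hd : 2 ≤ d) (P : Finset (EuclideanSpace ℝ (Fin d))) (hP : P.card = n)
    (hn : 2 ≤ n) (E₁ E₂ : ℕ) (hE₁n : E₁ ≤ n) (hE₁₂ : E₁ ≤ E₂) (hE₂n : E₂ ≤ n)
    (hN1 : (2 * d + 1) * (n - E₁) ≤ 2 * n - 1)
    (hN2 : d * (n - E₁) + 1 ≤ E₂) :
    ∃ p₁ p₂ : EuclideanSpace ℝ (Fin d),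
      (∀ S : Finset (EuclideanSpace ℝ (Fin d)), S ⊆ P → E₁ ≤ S.card →
        p₁ ∈ convexHull ℝ (S : Set (EuclideanSpace ℝ (Fin d))) ∨
          p₂ ∈ convexHull ℝ (S : Set (EuclideanSpace ℝ (Fin d)))) ∧
      (∀ S : Finset (EuclideanSpace ℝ (Fin d)), S ⊆ P → E₂ ≤ S.card →
        p₁ ∈ convexHull ℝ (S : Set (EuclideanSpace ℝ (Fin d))) ∧
          p₂ ∈ convexHull ℝ (S : Set (EuclideanSpace ℝ (Fin d)))) := by
  classical
  set m := 2 * d + 1 with hm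
  set D := n - E₁ with hD
  set θ₁ := D / 2 with hθ₁
  set θ₂ := D - 1 - θ₁ with hθ₂
  have hθsum : θ₁ + θ₂ + 1 ≥ D := by omega
  have hθ₂₁ : θ₂ ≤ θ₁ := by omega
  set a := (m * θ₁ + 2) / 2 with ha
  have h2a : m * θ₁ + 1 ≤ 2 * a := by omega
  have hab : m * θ₁ + m * θ₂ + 3 ≤ 2 * n := by
    rcases Nat.eq_zero_or_pos D with hD0 | hD1
    · have hz1 : θ₁ = 0 := by omega
      have hz2 : θ₂ = 0 := by omega
      rw [hz1, hz2]
      omega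
    · have hsum' : θ₁ + θ₂ + 1 = D := by omega
      have hmul : m * θ₁ + m * θ₂ + m = m * D := by
        calc m * θ₁ + m * θ₂ + m = m * (θ₁ + θ₂ + 1) := by ring
        _ = m * D := by rw [hsum']
      omega
  have h2b : m * θ₂ + 1 ≤ 2 * (n - a) := by omega
  have ha1 : 1 ≤ a := by omega
  have han : a < n := by omega
  have hmD : m * D = 2 * (d * D) + D := by rw [hm]; ring
  have hθL1 : d * D + θ₁ + 1 ≤ n := by omega
  have hθL2 : d * D + θ₂ + 1 ≤ n := by omega
  -- generic direction
  obtain ⟨v, hv⟩ := exists_inj_functional P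
  set w : EuclideanSpace ℝ (Fin d) →ₗ[ℝ] ℝ := innerₗ (EuclideanSpace ℝ (Fin d)) v with hw
  have hwv : ∀ p : Ed, w p = ⟪v, p⟫ := fun p => rfl
  have hwinj : ∀ p ∈ P, ∀ q ∈ P, p ≠ q → w p ≠ w q := by
    intro p hp q hq hpq
    rw [hwv, hwv]
    exact hv p hp q hq hpq
  have hw0 : w ≠ 0 := by
    obtain ⟨p, hp, q, hq, hpq⟩ := Finset.one_lt_card.mp (by omega : 1 < P.card)
    intro h
    exact hwinj p hp q hq hpq (by rw [h]; rfl)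
  -- the cut
  obtain ⟨c, hcut, hacard⟩ := exists_cut P (fun p => w p) hwinj a ha1 (by omega)
  set A := P.filter (fun p => c < w p) with hA
  set B := P.filter (fun p => w p < c) with hB
  have hABdisj : Disjoint A B := by
    rw [Finset.disjoint_left]
    intro p hpA hpB
    exact absurd ((mem_filter.mp hpA).2.trans (mem_filter.mp hpB).2) (lt_irrefl c)
  have hABunion : A ∪ B = P := by
    ext p
    simp only [mem_union, hA, hB, mem_filter]
    constructor
    · rintro (h | h) <;> exact h.1
    · intro hp
      rcases lt_trichotomy c (w p) with h | h | h
      · exact Or.inl ⟨hp, h⟩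
      · exact absurd h.symm (hcut p hp)
      · exact Or.inr ⟨hp, h⟩
  have hBcard : B.card = n - a := by
    have := Finset.card_union_of_disjoint hABdisj
    rw [hABunion, hP, hacard] at this
    omega
  -- B as a filter for the negated functional
  have hBneg : B = P.filter (fun p => -c < (-w) p) := by
    rw [hB]
    apply filter_congr
    intro p _
    simp only [LinearMap.neg_apply, neg_lt_neg_iff]
  have hcutneg : ∀ p ∈ P, (-w) p ≠ -c := by
    intro p hp h
    apply hcut p hp
    have : -(w p) = -c := h
    linarith [this]
  -- coverage
  have hcover : ∀ S : Finset Ed, S ⊆ P → E₁ ≤ S.card →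
      (A \ S).card ≤ θ₁ ∨ (B \ S).card ≤ θ₂ := by
    intro S hSP hSE
    by_contra hcon
    push_neg at hcon
    have hdisj2 : Disjoint (A \ S) (B \ S) :=
      Finset.disjoint_of_subset_left (sdiff_subset) (Finset.disjoint_of_subset_right (sdiff_subset) hABdisj)
    have hsub3 : (A \ S) ∪ (B \ S) ⊆ P \ S := by
      intro p hp
      rcases mem_union.mp hp with h | h
      · rw [mem_sdiff] at h ⊢
        exact ⟨(filter_subset _ _) h.1, h.2⟩
      · rw [mem_sdiff] at h ⊢
        exact ⟨(filter_subset _ _) h.1, h.2⟩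
    have hcard3 : (A \ S).card + (B \ S).card ≤ n - S.card := by
      calc (A \ S).card + (B \ S).card = ((A \ S) ∪ (B \ S)).card :=
            (Finset.card_union_of_disjoint hdisj2).symm
      _ ≤ (P \ S).card := card_le_card hsub3
      _ = n - S.card := by rw [card_sdiff_of_subset hSP, hP]
    omega
  -- the two families
  set fam : Finset Ed → ℕ → Finset (Finset Ed) := fun X θ =>
    P.powerset.filter (fun S => (E₁ ≤ S.card ∧ (X \ S).card ≤ θ) ∨ E₂ ≤ S.card) with hfam
  have hfam_mem : ∀ X θ S, S ∈ fam X θ ↔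
      (S ⊆ P ∧ ((E₁ ≤ S.card ∧ (X \ S).card ≤ θ) ∨ E₂ ≤ S.card)) := by
    intro X θ S
    rw [hfam, mem_filter, mem_powerset]
  -- intersection property for each family
  have hhelly : ∀ (w' : EuclideanSpace ℝ (Fin d) →ₗ[ℝ] ℝ) (c' : ℝ) (X : Finset Ed) (θ : ℕ),
      w' ≠ 0 → (∀ p ∈ P, w' p ≠ c') → X = P.filter (fun p => c' < w' p) →
      ((2 * d + 1) * θ + 1 ≤ 2 * X.card) → (d * (n - E₁) + θ + 1 ≤ n) →
      (⋂ S ∈ fam X θ, convexHull ℝ (S : Set Ed)).Nonempty := by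
    intro w' c' X θ hw'0 hcut' hX' hθa' hθL'
    apply Convex.helly_theorem' (fun S _ => convex_convexHull ℝ _)
    intro I hIfam hIcard
    rw [finrank_euclideanSpace_fin] at hIcard
    have hIsub : ∀ S ∈ I, S ⊆ P := fun S hS => ((hfam_mem X θ S).mp (hIfam hS)).1
    have hIE : ∀ S ∈ I, E₁ ≤ S.card := by
      intro S hS
      rcases ((hfam_mem X θ S).mp (hIfam hS)).2 with h | h
      · exact h.1
      · omega
    by_cases hbig : (I.card ≤ d) ∨ ∃ T ∈ I, E₂ ≤ T.card
    · -- counting case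
      have hsum : ∑ S ∈ I, (P.card - S.card) < P.card := by
        rw [hP]
        rcases hbig with hsmall | ⟨T, hTI, hTbig⟩
        · calc ∑ S ∈ I, (n - S.card) ≤ ∑ _S ∈ I, D := by
                apply sum_le_sum
                intro S hS
                have := hIE S hS
                omega
          _ = I.card * D := by rw [sum_const, smul_eq_mul]
          _ ≤ d * D := Nat.mul_le_mul_right D hsmall
          _ < n := by omega
        · have hsplit : ∑ S ∈ I, (n - S.card)
              = (n - T.card) + ∑ S ∈ I.erase T, (n - S.card) :=
            (Finset.add_sum_erase _ _ hTI).symm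
          rw [hsplit]
          have h1 : n - T.card ≤ n - E₂ := by omega
          have h2 : ∑ S ∈ I.erase T, (n - S.card) ≤ d * D := by
            calc ∑ S ∈ I.erase T, (n - S.card) ≤ ∑ _S ∈ I.erase T, D := by
                  apply sum_le_sum
                  intro S hS
                  have := hIE S (mem_of_mem_erase hS)
                  omega
            _ = (I.erase T).card * D := by rw [sum_const, smul_eq_mul]
            _ ≤ d * D := by
                apply Nat.mul_le_mul_right D
                have := card_erase_of_mem hTI
                omega
          omega
      obtain ⟨p, hpP, hpall⟩ := count_common P I hIsub hsum
      exact ⟨p, Set.mem_iInter₂.mpr (fun S hS => subset_convexHull ℝ _ (hpall S hS))⟩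
    · -- key lemma case
      push_neg at hbig
      obtain ⟨hIcard', hnobig⟩ := hbig
      have hIcard'' : I.card = d + 1 := by omega
      have hIdef : ∀ S ∈ I, (X \ S).card ≤ θ := by
        intro S hS
        rcases ((hfam_mem X θ S).mp (hIfam hS)).2 with h | h
        · exact h.2
        · exact absurd h (by have := hnobig S hS; omega)
      exact key_lemma hd P hP w' hw'0 c' hcut' X hX' E₁ θ hE₁n hθa' hθL' I hIcard'' hIsub hIE hIdef
  obtain ⟨p₁, hp₁⟩ := hhelly w c A θ₁ hw0 hcut hA (by rw [← hm]; omega) hθL1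
  obtain ⟨p₂, hp₂⟩ := hhelly (-w) (-c) B θ₂ (neg_ne_zero.mpr hw0) hcutneg hBneg (by rw [← hm]; omega) hθL2
  have hp₁' : ∀ S ∈ fam A θ₁, p₁ ∈ convexHull ℝ (S : Set Ed) :=
    fun S hS => Set.mem_iInter₂.mp hp₁ S hS
  have hp₂' : ∀ S ∈ fam B θ₂, p₂ ∈ convexHull ℝ (S : Set Ed) :=
    fun S hS => Set.mem_iInter₂.mp hp₂ S hS
  refine ⟨p₁, p₂, ?_, ?_⟩
  · intro S hSP hSE
    rcases hcover S hSP hSE with h | h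
    · exact Or.inl (hp₁' S ((hfam_mem A θ₁ S).mpr ⟨hSP, Or.inl ⟨hSE, h⟩⟩))
    · exact Or.inr (hp₂' S ((hfam_mem B θ₂ S).mpr ⟨hSP, Or.inl ⟨hSE, h⟩⟩))
  · intro S hSP hSE
    exact ⟨hp₁' S ((hfam_mem A θ₁ S).mpr ⟨hSP, Or.inr hSE⟩),
      hp₂' S ((hfam_mem B θ₂ S).mpr ⟨hSP, Or.inr hSE⟩)⟩

end Helpers

lemma ptsIn_eq_card_filter {d : ℕ} (P : Finset (EuclideanSpace ℝ (Fin d)))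
    (C : Set (EuclideanSpace ℝ (Fin d))) :
    ptsIn P C = (P.filter (fun p => p ∈ C)).card := by
  rw [ptsIn, ← Set.ncard_coe_finset]
  congr 1
  ext x
  simp [Finset.mem_filter]

/-- weighted ε-nets of size 2 for convex sets in `ℝ^d`. -/
theorem weighted_net_convex {d : ℕ} (hd : 2 ≤ d)
    (P : Finset (EuclideanSpace ℝ (Fin d))) (n : ℕ) (hn : P.card = n)
    (hgp : GeneralPosition P)
    (ε₁ ε₂ : ℝ) (hε₁ : 0 < ε₁) (hε₁₂ : ε₁ ≤ ε₂) (hε₂ : ε₂ < 1)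
    (hsum : d * ε₁ + ε₂ ≥ d)
    (hlow : ε₁ ≥ (2 * d - 1) / (2 * d + 1)) :
    ∃ p₁ p₂ : EuclideanSpace ℝ (Fin d),
      (∀ C : Set (EuclideanSpace ℝ (Fin d)), Convex ℝ C →
        (ptsIn P C : ℝ) > ε₁ * n → p₁ ∈ C ∨ p₂ ∈ C) ∧
      (∀ C : Set (EuclideanSpace ℝ (Fin d)), Convex ℝ C →
        (ptsIn P C : ℝ) > ε₂ * n → p₁ ∈ C ∧ p₂ ∈ C) := by
  classical
  have hε₂0 : 0 < ε₂ := lt_of_lt_of_le hε₁ hε₁₂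
  have hε₁1 : ε₁ < 1 := lt_of_le_of_lt hε₁₂ hε₂
  rcases Nat.lt_or_ge n 2 with hn2 | hn2
  · -- trivial small cases
    interval_cases n
    · refine ⟨0, 0, ?_, ?_⟩ <;>
      · intro C _ hC
        exfalso
        have hP : P = ∅ := Finset.card_eq_zero.mp hn
        have : ptsIn P C = 0 := by
          rw [ptsIn, hP]
          simp
        rw [this] at hC
        simp at hC
    · obtain ⟨p₀, hp₀⟩ := Finset.card_eq_one.mp hn
      have hmem : ∀ (C : Set (EuclideanSpace ℝ (Fin d))) (ε : ℝ), 0 < ε →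
          (ptsIn P C : ℝ) > ε * 1 → p₀ ∈ C := by
        intro C ε hε h
        have h1 : 1 ≤ ptsIn P C := by
          by_contra hcon
          push_neg at hcon
          have h0 : ptsIn P C = 0 := by omega
          rw [h0] at h
          norm_num at h
          linarith
        have : ((P : Set (EuclideanSpace ℝ (Fin d))) ∩ C).Nonempty := by
          rw [← Set.ncard_pos ((Set.toFinite _))]
          exact h1
        obtain ⟨x, hxP, hxC⟩ := this
        have : x = p₀ := by
          rw [hp₀] at hxP
          simpa using hxP
        exact this ▸ hxC
      exact ⟨p₀, p₀, fun C _ h => Or.inl (hmem C ε₁ hε₁ (by exact_mod_cast h)),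
        fun C _ h => ⟨hmem C ε₂ hε₂0 (by exact_mod_cast h), hmem C ε₂ hε₂0 (by exact_mod_cast h)⟩⟩
  · -- main case
    set F₁ := ⌊ε₁ * n⌋₊ with hF₁
    set F₂ := ⌊ε₂ * n⌋₊ with hF₂
    set E₁ := F₁ + 1 with hE₁def
    set E₂ := F₂ + 1 with hE₂def
    have hn0 : 0 < n := by omega
    have hnR : (0:ℝ) < n := by exact_mod_cast hn0
    have hF₁lt : (F₁ : ℝ) ≤ ε₁ * n := Nat.floor_le (by positivity)
    have hF₁gt : ε₁ * n < F₁ + 1 := Nat.lt_floor_add_one _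
    have hF₂gt : ε₂ * n < F₂ + 1 := Nat.lt_floor_add_one _
    have hE₁n : E₁ ≤ n := by
      have : F₁ < n := by
        rw [hF₁]
        rw [Nat.floor_lt (by positivity)]
        calc ε₁ * n < 1 * n := by
              apply mul_lt_mul_of_pos_right hε₁1 hnR
        _ = n := one_mul _
      omega
    have hE₂n : E₂ ≤ n := by
      have : F₂ < n := by
        rw [hF₂]
        rw [Nat.floor_lt (by positivity)]
        calc ε₂ * n < 1 * n := by
              apply mul_lt_mul_of_pos_right hε₂ hnR
        _ = n := one_mul _
      omega
    have hE₁₂ : E₁ ≤ E₂ := by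
      have : F₁ ≤ F₂ := Nat.floor_le_floor (by nlinarith)
      omega
    set k := n - E₁ with hk
    have hkR : (k : ℝ) = (n : ℝ) - E₁ := by
      rw [hk]
      push_cast [Nat.cast_sub hE₁n]
      ring
    have hkub : (k:ℝ) < (n:ℝ) - ε₁ * n := by
      rw [hkR, hE₁def]
      push_cast
      linarith
    have hdR : (2:ℝ) ≤ d := by exact_mod_cast hd
    have hN1 : (2 * d + 1) * (n - E₁) ≤ 2 * n - 1 := by
      have hreal : ((2 * d + 1) * k : ℝ) < 2 * n := by
        have h1 : ((2:ℝ) * d + 1) * (1 - ε₁) ≤ 2 := by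
          have hpos : (0:ℝ) < 2 * d + 1 := by linarith
          rw [ge_iff_le, div_le_iff₀ hpos] at hlow
          nlinarith
        have h2 : ((2:ℝ) * d + 1) * k < (2 * d + 1) * ((1 - ε₁) * n) := by
          apply mul_lt_mul_of_pos_left _ (by linarith : (0:ℝ) < 2 * d + 1)
          calc (k:ℝ) < n - ε₁ * n := hkub
          _ = (1 - ε₁) * n := by ring
        calc ((2:ℝ) * d + 1) * k < (2 * d + 1) * ((1 - ε₁) * n) := h2
        _ = ((2 * d + 1) * (1 - ε₁)) * n := by ring
        _ ≤ 2 * n := by nlinarith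
      have hnat : (2 * d + 1) * k < 2 * n := by exact_mod_cast hreal
      rw [← hk]
      omega
    have hN2 : d * (n - E₁) + 1 ≤ E₂ := by
      have hreal : ((d * k : ℕ) : ℝ) ≤ ε₂ * n := by
        push_cast
        have h1 : (d:ℝ) * k < d * ((1 - ε₁) * n) := by
          apply mul_lt_mul_of_pos_left _ (by linarith : (0:ℝ) < d)
          calc (k:ℝ) < n - ε₁ * n := hkub
          _ = (1 - ε₁) * n := by ring
        have h2 : (d:ℝ) * ((1 - ε₁) * n) ≤ ε₂ * n := by nlinarith
        linarith
      have : d * k ≤ F₂ := Nat.le_floor hreal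
      rw [← hk]
      omega
    obtain ⟨p₁, p₂, hR1, hR2⟩ := core hd P hn hn2 E₁ E₂ hE₁n hE₁₂ hE₂n hN1 hN2
    have hconv : ∀ (C : Set (EuclideanSpace ℝ (Fin d))), Convex ℝ C →
        ∀ (S : Finset (EuclideanSpace ℝ (Fin d))), S = P.filter (fun p => p ∈ C) →
        convexHull ℝ (S : Set (EuclideanSpace ℝ (Fin d))) ⊆ C := by
      intro C hC S hS
      apply convexHull_min _ hC
      intro x hx
      rw [hS] at hx
      exact (Finset.mem_filter.mp (by exact_mod_cast hx)).2
    have hcard : ∀ (C : Set (EuclideanSpace ℝ (Fin d))) (ε : ℝ) (F : ℕ), F = ⌊ε * n⌋₊ →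
        0 < ε → (ptsIn P C : ℝ) > ε * n → F + 1 ≤ (P.filter (fun p => p ∈ C)).card := by
      intro C ε F hF hε h
      rw [ptsIn_eq_card_filter] at h
      have : ⌊ε * n⌋₊ < (P.filter (fun p => p ∈ C)).card := by
        rw [Nat.floor_lt (by positivity)]
        exact h
      omega
    refine ⟨p₁, p₂, ?_, ?_⟩
    · intro C hC h
      rcases hR1 (P.filter (fun p => p ∈ C)) (filter_subset _ _)
        (hcard C ε₁ F₁ hF₁ hε₁ h) with h' | h'
      · exact Or.inl (hconv C hC _ rfl h')
      · exact Or.inr (hconv C hC _ rfl h')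
    · intro C hC h
      obtain ⟨h1, h2⟩ := hR2 (P.filter (fun p => p ∈ C)) (filter_subset _ _)
        (hcard C ε₂ F₂ hF₂ hε₂0 h)
      exact ⟨hconv C hC _ rfl h1, hconv C hC _ rfl h2⟩
end

section
/- For every d ≥ 2 there exists a set P of d+2 points in ℝ^d such that for any two points p₁, p₂ ∈ ℝ^d there is a compact convex set containing d points of P but containing neither p₁ nor p₂. -/
namespace LB5

/-- The vertices of the standard simplex. -/
noncomputable def vv (d : ℕ) (i : Fin d) : EuclideanSpace ℝ (Fin d) :=
  EuclideanSpace.single i 1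

/-- The apex above the simplex. -/
noncomputable def uu1 (d : ℕ) : EuclideanSpace ℝ (Fin d) := WithLp.toLp 2 (fun _ => 1/(d:ℝ) + 1)

/-- The apex below the simplex. -/
noncomputable def uu2 (d : ℕ) : EuclideanSpace ℝ (Fin d) := WithLp.toLp 2 (fun _ => 1/(d:ℝ) - 1)

/-- Sum of coordinates. -/
noncomputable def ss (d : ℕ) (x : EuclideanSpace ℝ (Fin d)) : ℝ := ∑ k, x k

lemma vv_apply (d : ℕ) (i k : Fin d) : vv d i k = if k = i then 1 else 0 := by
  rw [vv, EuclideanSpace.single_apply]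

lemma uu1_apply (d : ℕ) (k : Fin d) : uu1 d k = 1/(d:ℝ) + 1 := rfl
lemma uu2_apply (d : ℕ) (k : Fin d) : uu2 d k = 1/(d:ℝ) - 1 := rfl

lemma ss_vv (d : ℕ) (i : Fin d) : ss d (vv d i) = 1 := by
  simp [ss, vv_apply]

lemma ss_uu1 (d : ℕ) : ss d (uu1 d) = (d:ℝ) * (1/(d:ℝ) + 1) := by
  simp [ss, uu1_apply, Finset.sum_const]
  ring

lemma ss_uu2 (d : ℕ) : ss d (uu2 d) = (d:ℝ) * (1/(d:ℝ) - 1) := by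
  simp [ss, uu2_apply, Finset.sum_const]
  ring

lemma comb_apply (d : ℕ) (x y : EuclideanSpace ℝ (Fin d)) (a b : ℝ) (k : Fin d) :
    (a • x + b • y) k = a * x k + b * y k := by
  simp [PiLp.add_apply, PiLp.smul_apply]

lemma ss_comb (d : ℕ) (x y : EuclideanSpace ℝ (Fin d)) (a b : ℝ) :
    ss d (a • x + b • y) = a * ss d x + b * ss d y := by
  simp [ss, comb_apply, Finset.sum_add_distrib, Finset.mul_sum]

lemma vv_inj (d : ℕ) : Function.Injective (vv d) := by
  intro a b h
  by_contra hne
  have h' : vv d a a = vv d b a := by rw [h]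
  rw [vv_apply, vv_apply, if_pos rfl, if_neg (fun hc : a = b => hne hc)] at h'
  norm_num at h'

/-- The embedding version of `vv`. -/
noncomputable def vvEmb (d : ℕ) : Fin d ↪ EuclideanSpace ℝ (Fin d) :=
  ⟨vv d, vv_inj d⟩

lemma vvEmb_apply (d : ℕ) (i : Fin d) : vvEmb d i = vv d i := rfl

section withd

variable {d : ℕ}

lemma dpos (hd : 2 ≤ d) : (0:ℝ) < (d:ℝ) := by
  have : (2:ℝ) ≤ (d:ℝ) := by exact_mod_cast hd
  linarith

lemma dne (hd : 2 ≤ d) : ((d:ℝ)) ≠ 0 := ne_of_gt (dpos hd)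

lemma uu1_ne_vv (hd : 2 ≤ d) (i : Fin d) : uu1 d ≠ vv d i := by
  intro h
  have h2 : ss d (uu1 d) = ss d (vv d i) := by rw [h]
  rw [ss_uu1, ss_vv] at h2
  have hD := dpos hd
  have h3 : (d:ℝ) * (1/(d:ℝ) + 1) = 1 + (d:ℝ) := by field_simp
  rw [h3] at h2
  linarith

lemma uu2_ne_vv (hd : 2 ≤ d) (i : Fin d) : uu2 d ≠ vv d i := by
  intro h
  have h2 : ss d (uu2 d) = ss d (vv d i) := by rw [h]
  rw [ss_uu2, ss_vv] at h2
  have hD : (2:ℝ) ≤ (d:ℝ) := by exact_mod_cast hd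
  have hD0 := dpos hd
  have h3 : (d:ℝ) * (1/(d:ℝ) - 1) = 1 - (d:ℝ) := by field_simp
  rw [h3] at h2
  linarith

lemma uu1_ne_uu2 (hd : 2 ≤ d) : uu1 d ≠ uu2 d := by
  intro h
  have hk : 0 < d := by omega
  have h2 : uu1 d ⟨0, hk⟩ = uu2 d ⟨0, hk⟩ := by rw [h]
  rw [uu1_apply, uu2_apply] at h2
  linarith

lemma uu2_not_mem_map (hd : 2 ≤ d) (s : Finset (Fin d)) :
    uu2 d ∉ Finset.map (vvEmb d) s := by
  intro hmem
  rw [Finset.mem_map] at hmem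
  obtain ⟨k, -, hk⟩ := hmem
  exact uu2_ne_vv hd k hk.symm

lemma uu1_not_mem_map (hd : 2 ≤ d) (s : Finset (Fin d)) :
    uu1 d ∉ Finset.map (vvEmb d) s := by
  intro hmem
  rw [Finset.mem_map] at hmem
  obtain ⟨k, -, hk⟩ := hmem
  exact uu1_ne_vv hd k hk.symm

lemma uu1_not_mem_cons (hd : 2 ≤ d) (s : Finset (Fin d))
    (h : uu2 d ∉ Finset.map (vvEmb d) s) :
    uu1 d ∉ Finset.cons (uu2 d) (Finset.map (vvEmb d) s) h := by
  intro hmem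
  rw [Finset.mem_cons] at hmem
  rcases hmem with h1 | h1
  · exact uu1_ne_uu2 hd h1
  · exact uu1_not_mem_map hd s h1

/-- The point set `P`. -/
noncomputable def PP (hd : 2 ≤ d) : Finset (EuclideanSpace ℝ (Fin d)) :=
  Finset.cons (uu1 d)
    (Finset.cons (uu2 d) (Finset.map (vvEmb d) Finset.univ)
      (uu2_not_mem_map hd Finset.univ))
    (uu1_not_mem_cons hd Finset.univ _)

lemma PP_card (hd : 2 ≤ d) : (PP hd).card = d + 2 := by
  rw [PP, Finset.card_cons, Finset.card_cons, Finset.card_map, Finset.card_univ,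
    Fintype.card_fin]

lemma mem_PP_uu1 (hd : 2 ≤ d) : uu1 d ∈ PP hd := by
  rw [PP, Finset.mem_cons]; left; rfl

lemma mem_PP_uu2 (hd : 2 ≤ d) : uu2 d ∈ PP hd := by
  rw [PP, Finset.mem_cons, Finset.mem_cons]; right; left; rfl

lemma mem_PP_vv (hd : 2 ≤ d) (i : Fin d) : vv d i ∈ PP hd := by
  rw [PP, Finset.mem_cons, Finset.mem_cons]
  right; right
  rw [Finset.mem_map]
  exact ⟨i, Finset.mem_univ i, rfl⟩

/-! ### The convex "witness" supersets -/

/-- Superset for the base simplex: the hyperplane of coordinate-sum one. -/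
def QS : Set (EuclideanSpace ℝ (Fin d)) := {x | ss d x = 1}

/-- Superset for the upper side simplices. -/
def QA (i : Fin d) : Set (EuclideanSpace ℝ (Fin d)) :=
  {x | 1 ≤ ss d x ∧ (d:ℝ)^2 * x i = (ss d x - 1) * ((d:ℝ) + 1)}

/-- Superset for the lower side simplices. -/
def QB (i : Fin d) : Set (EuclideanSpace ℝ (Fin d)) :=
  {x | ss d x ≤ 1 ∧ (d:ℝ)^2 * x i = (1 - ss d x) * (1 - (d:ℝ))}

/-- Superset for the bipyramidal pieces. -/
def QD (i j : Fin d) : Set (EuclideanSpace ℝ (Fin d)) :=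
  {x | x i = x j ∧ ∀ k, x i ≤ x k}

lemma convex_QS : Convex ℝ (QS (d := d)) := by
  intro x hx y hy a b ha hb hab
  simp only [QS, Set.mem_setOf_eq] at *
  rw [ss_comb, hx, hy]
  linarith

lemma convex_QA (i : Fin d) : Convex ℝ (QA i) := by
  intro x hx y hy a b ha hb hab
  obtain ⟨hx1, hx2⟩ := hx
  obtain ⟨hy1, hy2⟩ := hy
  constructor
  · rw [ss_comb]
    nlinarith
  · rw [ss_comb, comb_apply]
    nlinarith [hx2, hy2]

lemma convex_QB (i : Fin d) : Convex ℝ (QB i) := by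
  intro x hx y hy a b ha hb hab
  obtain ⟨hx1, hx2⟩ := hx
  obtain ⟨hy1, hy2⟩ := hy
  constructor
  · rw [ss_comb]
    nlinarith
  · rw [ss_comb, comb_apply]
    nlinarith [hx2, hy2]

lemma convex_QD (i j : Fin d) : Convex ℝ (QD i j) := by
  intro x hx y hy a b ha hb hab
  obtain ⟨hx1, hx2⟩ := hx
  obtain ⟨hy1, hy2⟩ := hy
  constructor
  · rw [comb_apply, comb_apply, hx1, hy1]
  · intro k
    rw [comb_apply, comb_apply]
    have h1 := hx2 k
    have h2 := hy2 k
    nlinarith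

/-! ### The generator finsets -/

/-- Generators of the base simplex. -/
noncomputable def TS : Finset (EuclideanSpace ℝ (Fin d)) :=
  Finset.map (vvEmb d) Finset.univ

/-- Generators of the upper side simplex opposite `vᵢ`. -/
noncomputable def TA (hd : 2 ≤ d) (i : Fin d) : Finset (EuclideanSpace ℝ (Fin d)) :=
  Finset.cons (uu1 d) (Finset.map (vvEmb d) (Finset.univ.erase i))
    (uu1_not_mem_map hd _)

/-- Generators of the lower side simplex opposite `vᵢ`. -/
noncomputable def TB (hd : 2 ≤ d) (i : Fin d) : Finset (EuclideanSpace ℝ (Fin d)) :=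
  Finset.cons (uu2 d) (Finset.map (vvEmb d) (Finset.univ.erase i))
    (uu2_not_mem_map hd _)

/-- Generators of the bipyramidal piece opposite `vᵢ, vⱼ`. -/
noncomputable def TD (hd : 2 ≤ d) (i j : Fin d) : Finset (EuclideanSpace ℝ (Fin d)) :=
  Finset.cons (uu1 d)
    (Finset.cons (uu2 d) (Finset.map (vvEmb d) (Finset.univ \ {i, j}))
      (uu2_not_mem_map hd _))
    (uu1_not_mem_cons hd _ _)

lemma TS_card : (TS (d := d)).card = d := by
  rw [TS, Finset.card_map, Finset.card_univ, Fintype.card_fin]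

lemma TA_card (hd : 2 ≤ d) (i : Fin d) : (TA hd i).card = d := by
  rw [TA, Finset.card_cons, Finset.card_map, Finset.card_erase_of_mem (Finset.mem_univ i),
    Finset.card_univ, Fintype.card_fin]
  omega

lemma TB_card (hd : 2 ≤ d) (i : Fin d) : (TB hd i).card = d := by
  rw [TB, Finset.card_cons, Finset.card_map, Finset.card_erase_of_mem (Finset.mem_univ i),
    Finset.card_univ, Fintype.card_fin]
  omega

lemma TD_card (hd : 2 ≤ d) (i j : Fin d) (hij : i ≠ j) : (TD hd i j).card = d := by
  rw [TD, Finset.card_cons, Finset.card_cons, Finset.card_map, Finset.card_sdiff_of_subset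
    (Finset.subset_univ _), Finset.card_univ, Fintype.card_fin,
    Finset.card_pair hij]
  omega

lemma TS_subset (hd : 2 ≤ d) : TS (d := d) ⊆ PP hd := by
  intro x hx
  rw [TS, Finset.mem_map] at hx
  obtain ⟨i, -, rfl⟩ := hx
  exact mem_PP_vv hd i

lemma TA_subset (hd : 2 ≤ d) (i : Fin d) : TA hd i ⊆ PP hd := by
  intro x hx
  rw [TA, Finset.mem_cons] at hx
  rcases hx with rfl | hx
  · exact mem_PP_uu1 hd
  · rw [Finset.mem_map] at hx
    obtain ⟨k, -, rfl⟩ := hx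
    exact mem_PP_vv hd k

lemma TB_subset (hd : 2 ≤ d) (i : Fin d) : TB hd i ⊆ PP hd := by
  intro x hx
  rw [TB, Finset.mem_cons] at hx
  rcases hx with rfl | hx
  · exact mem_PP_uu2 hd
  · rw [Finset.mem_map] at hx
    obtain ⟨k, -, rfl⟩ := hx
    exact mem_PP_vv hd k

lemma TD_subset (hd : 2 ≤ d) (i j : Fin d) : TD hd i j ⊆ PP hd := by
  intro x hx
  rw [TD, Finset.mem_cons, Finset.mem_cons] at hx
  rcases hx with rfl | rfl | hx
  · exact mem_PP_uu1 hd
  · exact mem_PP_uu2 hd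
  · rw [Finset.mem_map] at hx
    obtain ⟨k, -, rfl⟩ := hx
    exact mem_PP_vv hd k

/-! ### Generators lie in the witness supersets -/

lemma TS_mem_QS : (TS (d := d) : Set (EuclideanSpace ℝ (Fin d))) ⊆ QS (d := d) := by
  intro x hx
  rw [Finset.mem_coe, TS, Finset.mem_map] at hx
  obtain ⟨i, -, rfl⟩ := hx
  exact ss_vv d i

lemma TA_mem_QA (hd : 2 ≤ d) (i : Fin d) : ↑(TA hd i) ⊆ QA i := by
  intro x hx
  rw [Finset.mem_coe, TA, Finset.mem_cons] at hx
  have hD := dpos hd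
  rcases hx with rfl | hx
  · constructor
    · rw [ss_uu1]
      have h1 : (d:ℝ) * (1/(d:ℝ) + 1) = 1 + (d:ℝ) := by field_simp
      rw [h1]; linarith
    · rw [ss_uu1, uu1_apply]
      field_simp
      ring
  · rw [Finset.mem_map] at hx
    obtain ⟨k, hk, rfl⟩ := hx
    rw [Finset.mem_erase] at hk
    rw [vvEmb_apply]
    constructor
    · rw [ss_vv]
    · rw [ss_vv, vv_apply, if_neg (fun hik : i = k => hk.1 hik.symm)]
      ring

lemma TB_mem_QB (hd : 2 ≤ d) (i : Fin d) : ↑(TB hd i) ⊆ QB i := by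
  intro x hx
  rw [Finset.mem_coe, TB, Finset.mem_cons] at hx
  have hD := dpos hd
  rcases hx with rfl | hx
  · constructor
    · rw [ss_uu2]
      have h1 : (d:ℝ) * (1/(d:ℝ) - 1) = 1 - (d:ℝ) := by field_simp
      rw [h1]; linarith
    · rw [ss_uu2, uu2_apply]
      field_simp
      ring
  · rw [Finset.mem_map] at hx
    obtain ⟨k, hk, rfl⟩ := hx
    rw [Finset.mem_erase] at hk
    rw [vvEmb_apply]
    constructor
    · rw [ss_vv]
    · rw [ss_vv, vv_apply, if_neg (fun hik : i = k => hk.1 hik.symm)]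
      ring

lemma TD_mem_QD (hd : 2 ≤ d) (i j : Fin d) : ↑(TD hd i j) ⊆ QD i j := by
  intro x hx
  rw [Finset.mem_coe, TD, Finset.mem_cons, Finset.mem_cons] at hx
  rcases hx with rfl | rfl | hx
  · exact ⟨rfl, fun k => le_refl _⟩
  · exact ⟨rfl, fun k => le_refl _⟩
  · rw [Finset.mem_map] at hx
    obtain ⟨k, hk, rfl⟩ := hx
    rw [Finset.mem_sdiff] at hk
    have hki : k ≠ i := fun h => hk.2 (by simp [h])
    have hkj : k ≠ j := fun h => hk.2 (by simp [h])
    rw [vvEmb_apply]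
    constructor
    · rw [vv_apply, vv_apply, if_neg (fun h : i = k => hki h.symm),
        if_neg (fun h : j = k => hkj h.symm)]
    · intro m
      rw [vv_apply, vv_apply, if_neg (fun h : i = k => hki h.symm)]
      split <;> norm_num

/-! ### Non-membership lemmas -/

lemma not_mem_QA_of_lt {p : EuclideanSpace ℝ (Fin d)} (h : ss d p < 1) (i : Fin d) :
    p ∉ QA i := fun hp => absurd hp.1 (not_le.mpr h)

lemma not_mem_QB_of_gt {p : EuclideanSpace ℝ (Fin d)} (h : 1 < ss d p) (i : Fin d) :
    p ∉ QB i := fun hp => absurd hp.1 (not_le.mpr h)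

lemma not_mem_QA_of_ne (hd : 2 ≤ d) {p : EuclideanSpace ℝ (Fin d)} (hs : ss d p = 1)
    {i : Fin d} (hi : p i ≠ 0) : p ∉ QA i := by
  rintro ⟨-, h2⟩
  rw [hs] at h2
  apply hi
  have h3 : (d:ℝ)^2 * p i = 0 := by rw [h2]; ring
  have hD2 : (d:ℝ)^2 ≠ 0 := pow_ne_zero 2 (dne hd)
  exact (mul_eq_zero.mp h3).resolve_left hD2

lemma not_mem_QB_of_ne (hd : 2 ≤ d) {p : EuclideanSpace ℝ (Fin d)} (hs : ss d p = 1)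
    {i : Fin d} (hi : p i ≠ 0) : p ∉ QB i := by
  rintro ⟨-, h2⟩
  rw [hs] at h2
  apply hi
  have h3 : (d:ℝ)^2 * p i = 0 := by rw [h2]; ring
  have hD2 : (d:ℝ)^2 ≠ 0 := pow_ne_zero 2 (dne hd)
  exact (mul_eq_zero.mp h3).resolve_left hD2

lemma not_mem_QD_left {p : EuclideanSpace ℝ (Fin d)} {i : Fin d} (j : Fin d)
    (h : ∃ k, p k < p i) : p ∉ QD i j := by
  rintro ⟨-, h2⟩
  obtain ⟨k, hk⟩ := h
  exact absurd (h2 k) (not_le.mpr hk)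

lemma not_mem_QD_right {p : EuclideanSpace ℝ (Fin d)} (i : Fin d) {j : Fin d}
    (h : ∃ k, p k < p j) : p ∉ QD i j := by
  rintro ⟨h1, h2⟩
  obtain ⟨k, hk⟩ := h
  have h3 := h2 k
  rw [h1] at h3
  exact absurd h3 (not_le.mpr hk)

end withd

end LB5

open LB5 in
/-- for every `d ≥ 2` there is a set of `d + 2` points in `ℝ^d` such
that any two points `p₁, p₂` miss some compact convex set containing `d` points
of the set. -/
theorem lower_bound_general_dim (d : ℕ) (hd : 2 ≤ d) :
    ∃ P : Finset (EuclideanSpace ℝ (Fin d)), P.card = d + 2 ∧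
      ∀ p₁ p₂ : EuclideanSpace ℝ (Fin d),
        ∃ C : Set (EuclideanSpace ℝ (Fin d)), IsCompact C ∧ Convex ℝ C ∧
          d ≤ ptsIn P C ∧ p₁ ∉ C ∧ p₂ ∉ C := by
  refine ⟨PP hd, PP_card hd, ?_⟩
  intro p₁ p₂
  -- general builder
  have build : ∀ (T : Finset (EuclideanSpace ℝ (Fin d))) (Q : Set (EuclideanSpace ℝ (Fin d))),
      ↑T ⊆ Q → Convex ℝ Q → T ⊆ PP hd → T.card = d → p₁ ∉ Q → p₂ ∉ Q →
      ∃ C : Set (EuclideanSpace ℝ (Fin d)), IsCompact C ∧ Convex ℝ C ∧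
        d ≤ ptsIn (PP hd) C ∧ p₁ ∉ C ∧ p₂ ∉ C := by
    intro T Q hTQ hQ hTP hTcard h1 h2
    refine ⟨convexHull ℝ ↑T, T.finite_toSet.isCompact_convexHull (𝕜 := ℝ),
      convex_convexHull ℝ _, ?_, ?_, ?_⟩
    · have hsub : (T : Set (EuclideanSpace ℝ (Fin d))) ⊆
          ↑(PP hd) ∩ convexHull ℝ ↑T :=
        fun x hx => ⟨hTP hx, subset_convexHull ℝ _ hx⟩
      calc d = T.card := hTcard.symm
        _ = (T : Set (EuclideanSpace ℝ (Fin d))).ncard := (Set.ncard_coe_finset T).symm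
        _ ≤ ptsIn (PP hd) (convexHull ℝ ↑T) :=
          Set.ncard_le_ncard hsub ((PP hd).finite_toSet.inter_of_left _)
    · exact fun h => h1 (convexHull_min hTQ hQ h)
    · exact fun h => h2 (convexHull_min hTQ hQ h)
  have hi0 : (0:ℕ) < d := by omega
  set i0 : Fin d := ⟨0, hi0⟩ with hi0def
  -- helper: a point with coordinate sum 1 has a nonzero coordinate
  have exnz : ∀ p : EuclideanSpace ℝ (Fin d), ss d p = 1 → ∃ i, p i ≠ 0 := by
    intro p hp
    have hne' : ∑ k, p k ≠ 0 := by
      have : ∑ k, p k = 1 := hp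
      rw [this]; norm_num
    obtain ⟨i, -, hi⟩ := Finset.exists_ne_zero_of_sum_ne_zero hne'
    exact ⟨i, hi⟩
  -- helper: a point with sum 1 and all coordinates equal has all coordinates nonzero
  have allnz : ∀ p : EuclideanSpace ℝ (Fin d), ss d p = 1 →
      (∀ i k, ¬ p k < p i) → ∀ i, p i ≠ 0 := by
    intro p hp hall i h0
    have heq : ∀ k, p k = p i := fun k =>
      le_antisymm (not_lt.mp (hall k i)) (not_lt.mp (hall i k))
    have hsum : ss d p = (d:ℝ) * p i := by
      rw [ss, Finset.sum_congr rfl (fun k _ => heq k)]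
      simp [Finset.sum_const]
    rw [hp, h0, mul_zero] at hsum
    norm_num at hsum
  rcases lt_trichotomy (ss d p₁) 1 with hs1 | hs1 | hs1
  · rcases lt_trichotomy (ss d p₂) 1 with hs2 | hs2 | hs2
    · -- both below: upper side simplex
      exact build (TA hd i0) (QA i0) (TA_mem_QA hd i0) (convex_QA i0) (TA_subset hd i0)
        (TA_card hd i0) (not_mem_QA_of_lt hs1 i0) (not_mem_QA_of_lt hs2 i0)
    · -- p₁ below, p₂ on hyperplane
      obtain ⟨i, hi⟩ := exnz p₂ hs2
      exact build (TA hd i) (QA i) (TA_mem_QA hd i) (convex_QA i) (TA_subset hd i)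
        (TA_card hd i) (not_mem_QA_of_lt hs1 i) (not_mem_QA_of_ne hd hs2 hi)
    · -- opposite sides: base simplex
      exact build TS QS TS_mem_QS convex_QS (TS_subset hd) TS_card
        (fun h => absurd h (ne_of_lt hs1)) (fun h => absurd h (ne_of_gt hs2))
  · rcases lt_trichotomy (ss d p₂) 1 with hs2 | hs2 | hs2
    · -- p₁ on hyperplane, p₂ below
      obtain ⟨i, hi⟩ := exnz p₁ hs1
      exact build (TA hd i) (QA i) (TA_mem_QA hd i) (convex_QA i) (TA_subset hd i)
        (TA_card hd i) (not_mem_QA_of_ne hd hs1 hi) (not_mem_QA_of_lt hs2 i)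
    · -- both on hyperplane
      by_cases hc1 : ∃ i k, p₁ k < p₁ i
      · by_cases hc2 : ∃ i k, p₂ k < p₂ i
        · obtain ⟨i, k1, hk1⟩ := hc1
          obtain ⟨j, k2, hk2⟩ := hc2
          by_cases hij : i = j
          · subst hij
            haveI : Nontrivial (Fin d) := Fin.nontrivial_iff_two_le.mpr hd
            obtain ⟨j', hj'⟩ := exists_ne i
            exact build (TD hd i j') (QD i j') (TD_mem_QD hd i j') (convex_QD i j')
              (TD_subset hd i j') (TD_card hd i j' (Ne.symm hj'))
              (not_mem_QD_left j' ⟨k1, hk1⟩) (not_mem_QD_left j' ⟨k2, hk2⟩)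
          · exact build (TD hd i j) (QD i j) (TD_mem_QD hd i j) (convex_QD i j)
              (TD_subset hd i j) (TD_card hd i j hij)
              (not_mem_QD_left j ⟨k1, hk1⟩) (not_mem_QD_right i ⟨k2, hk2⟩)
        · -- p₂ has all coordinates equal, hence all nonzero
          push_neg at hc2
          obtain ⟨i, hi⟩ := exnz p₁ hs1
          exact build (TA hd i) (QA i) (TA_mem_QA hd i) (convex_QA i) (TA_subset hd i)
            (TA_card hd i) (not_mem_QA_of_ne hd hs1 hi)
            (not_mem_QA_of_ne hd hs2 (allnz p₂ hs2 (fun a k => not_lt.mpr (hc2 a k)) i))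
      · -- p₁ has all coordinates equal, hence all nonzero
        push_neg at hc1
        obtain ⟨i, hi⟩ := exnz p₂ hs2
        exact build (TA hd i) (QA i) (TA_mem_QA hd i) (convex_QA i) (TA_subset hd i)
          (TA_card hd i) (not_mem_QA_of_ne hd hs1 (allnz p₁ hs1 (fun a k => not_lt.mpr (hc1 a k)) i))
          (not_mem_QA_of_ne hd hs2 hi)
    · -- p₁ on hyperplane, p₂ above
      obtain ⟨i, hi⟩ := exnz p₁ hs1
      exact build (TB hd i) (QB i) (TB_mem_QB hd i) (convex_QB i) (TB_subset hd i)
        (TB_card hd i) (not_mem_QB_of_ne hd hs1 hi) (not_mem_QB_of_gt hs2 i)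
  · rcases lt_trichotomy (ss d p₂) 1 with hs2 | hs2 | hs2
    · -- opposite sides
      exact build TS QS TS_mem_QS convex_QS (TS_subset hd) TS_card
        (fun h => absurd h (ne_of_gt hs1)) (fun h => absurd h (ne_of_lt hs2))
    · -- p₁ above, p₂ on hyperplane
      obtain ⟨i, hi⟩ := exnz p₂ hs2
      exact build (TB hd i) (QB i) (TB_mem_QB hd i) (convex_QB i) (TB_subset hd i)
        (TB_card hd i) (not_mem_QB_of_gt hs1 i) (not_mem_QB_of_ne hd hs2 hi)
    · -- both above: lower side simplex
      exact build (TB hd i0) (QB i0) (TB_mem_QB hd i0) (convex_QB i0) (TB_subset hd i0)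
        (TB_card hd i0) (not_mem_QB_of_gt hs1 i0) (not_mem_QB_of_gt hs2 i0)
end

section
/- Let S be a (d−1)-simplex with vertices v₁,…,v_d in ℝ^d and let u₁ lie strictly above the hyperplane containing S (through its centroid). If p₁ lies strictly below the hyperplane containing conv(S), then the sets C_i := conv((vertices of S minus v_i) ∪ {u₁}), i = 1,…,d, do not contain p₁, and the intersection ⋂_{i=1}^d C_i lies strictly above conv(S)'s hyperplane. -/
open Finset Set

noncomputable def sumFunW {d : ℕ} (w : EuclideanSpace ℝ (Fin d)) :
    EuclideanSpace ℝ (Fin d) →ₗ[ℝ] ℝ where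
  toFun x := ∑ j, w j * x j
  map_add' x y := by
    simp [PiLp.add_apply, mul_add, Finset.sum_add_distrib]
  map_smul' r x := by
    simp [PiLp.smul_apply, Finset.mul_sum, smul_eq_mul]
    exact Finset.sum_congr rfl fun j _ => by ring

set_option maxHeartbeats 1000000 in
/-- if `v₁, …, v_d` span a hyperplane `{x | ∑ j, w j * x j = c}`,
`u₁` lies strictly above it on the perpendicular line through the centroid of the
simplex, and `p₁` lies strictly below the hyperplane, then none of the sets
`C i = conv((vertices minus v i) ∪ {u₁})` contains `p₁`, and the intersection of
all the `C i` lies strictly above the hyperplane. -/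
theorem facet_caps_avoid_below {d : ℕ} (hd : 1 ≤ d)
    (v : Fin d → EuclideanSpace ℝ (Fin d)) (hv : AffineIndependent ℝ v)
    (w : EuclideanSpace ℝ (Fin d)) (hw : w ≠ 0) (c : ℝ)
    (hvH : ∀ i, ∑ j, w j * v i j = c)
    (u₁ : EuclideanSpace ℝ (Fin d)) (t : ℝ) (ht : 0 < t)
    (hu₁ : u₁ = ((d : ℝ)⁻¹ • ∑ i, v i) + t • w)
    (p₁ : EuclideanSpace ℝ (Fin d)) (hp₁ : ∑ j, w j * p₁ j < c)
    (C : Fin d → Set (EuclideanSpace ℝ (Fin d)))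
    (hC : ∀ i, C i = convexHull ℝ ((v '' {j | j ≠ i}) ∪ {u₁})) :
    (∀ i, p₁ ∉ C i) ∧ (∀ x ∈ ⋂ i, C i, ∑ j, w j * x j > c) := by
  classical
  set F : EuclideanSpace ℝ (Fin d) →ₗ[ℝ] ℝ := sumFunW w with hFdef
  have hF : ∀ x, F x = ∑ j, w j * x j := fun x => rfl
  have hdne : (d : ℝ) ≠ 0 := by positivity
  have hn : 0 < ∑ j, w j * w j := by
    have hj : ∃ j, w j ≠ 0 := by
      by_contra h
      push_neg at h
      exact hw (by ext j; simpa using h j)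
    obtain ⟨j, hj⟩ := hj
    exact Finset.sum_pos' (fun j _ => mul_self_nonneg _)
      ⟨j, Finset.mem_univ j, mul_self_pos.2 hj⟩
  have hFu : F u₁ = c + t * ∑ j, w j * w j := by
    have h1 : F (∑ i, v i) = (d : ℝ) * c := by
      rw [map_sum]
      simp only [hF, hvH]
      simp [mul_comm]
    rw [hu₁, map_add, map_smul, map_smul, h1, hF]
    rw [smul_eq_mul, smul_eq_mul, inv_mul_cancel_left₀ hdne]
  have hFuc : c < F u₁ := by
    rw [hFu]; nlinarith
  have hAc : ∀ i, ∀ y ∈ convexHull ℝ (v '' {j | j ≠ i}), c ≤ F y := by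
    intro i y hy
    have hsub : convexHull ℝ (v '' {j | j ≠ i}) ⊆ {x | c ≤ F x} := by
      apply convexHull_min _ (convex_halfSpace_ge (LinearMap.isLinear F) c)
      rintro y ⟨j, hj, rfl⟩
      simp [hF, hvH]
    exact hsub hy
  have hge : ∀ i, ∀ y ∈ C i, c ≤ F y := by
    intro i y hy
    rw [hC i] at hy
    have hsub : convexHull ℝ ((v '' {j | j ≠ i}) ∪ {u₁}) ⊆ {x | c ≤ F x} := by
      apply convexHull_min _ (convex_halfSpace_ge (LinearMap.isLinear F) c)
      rintro y (⟨j, hj, rfl⟩ | rfl)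
      · simp [hF, hvH]
      · exact le_of_lt hFuc
    exact hsub hy
  constructor
  · intro i hp
    exact absurd (hge i p₁ hp) (by rw [hF]; exact not_le.2 hp₁)
  · intro x hx
    have hxi : ∀ i, x ∈ C i := fun i => Set.mem_iInter.1 hx i
    have hxc : c ≤ F x := hge ⟨0, hd⟩ x (hxi _)
    rw [show (∑ j, w j * x j) = F x from (hF x).symm]
    by_contra hlt
    push_neg at hlt
    have hxe : F x = c := le_antisymm hlt hxc
    have key : ∀ i, x ∈ convexHull ℝ (v '' {j | j ≠ i}) := by
      intro i
      have hx' := hxi i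
      rw [hC i] at hx'
      rcases Set.eq_empty_or_nonempty (v '' {j | j ≠ i}) with hA | hA
      · rw [hA, Set.empty_union, convexHull_singleton] at hx'
        rw [hx'] at hxe
        exact absurd hxe (ne_of_gt hFuc)
      · rw [Set.union_singleton, convexHull_insert hA] at hx'
        obtain ⟨a, ha, y, hy, hmem⟩ := mem_convexJoin.1 hx'
        rw [Set.mem_singleton_iff] at ha
        subst ha
        obtain ⟨s1, s2, hs1, hs2, hsum, hxeq⟩ := hmem
        have hFy : c ≤ F y := hAc i y hy
        have hFx : F x = s1 * F a + s2 * F y := by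
          rw [← hxeq]; simp [map_add, map_smul, smul_eq_mul]
        have hFyc : s1 * F a + s2 * F y = c := by rw [← hFx, hxe]
        have h0 : s1 * (F a - c) + s2 * (F y - c) = 0 := by
          linear_combination hFyc - c * hsum
        have h1 : s1 * (F a - c) = 0 := by
          linarith [mul_nonneg hs2 (sub_nonneg.2 hFy),
            mul_nonneg hs1 (le_of_lt (sub_pos.2 hFuc))]
        have hs1z : s1 = 0 := by
          rcases mul_eq_zero.1 h1 with h | h
          · exact h
          · exact absurd (sub_eq_zero.1 h) (ne_of_gt hFuc)
        have hxy : x = y := by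
          rw [← hxeq, hs1z]
          rw [show s2 = 1 by linarith]
          simp
        rw [hxy]; exact hy
    have hvinj := hv.injective
    have hS : AffineIndependent ℝ ((↑) : ↑(Finset.univ.image v : Finset (EuclideanSpace ℝ (Fin d))) → EuclideanSpace ℝ (Fin d)) := by
      have h2 : AffineIndependent ℝ ((↑) : (Set.range v) → EuclideanSpace ℝ (Fin d)) := hv.range
      have hco : (↑(Finset.univ.image v) : Set (EuclideanSpace ℝ (Fin d))) = Set.range v := by
        simp
      rw [← hco] at h2
      exact h2
    have hcoe : ∀ i, (↑((Finset.univ.erase i).image v) : Set (EuclideanSpace ℝ (Fin d))) = v '' {j | j ≠ i} := by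
      intro i
      simp only [Finset.coe_image, Finset.coe_erase, Finset.coe_univ]
      congr 1
      ext j
      simp
    have claim : ∀ I : Finset (Fin d), x ∈ convexHull ℝ (↑((Finset.univ \ I).image v) : Set (EuclideanSpace ℝ (Fin d))) := by
      intro I
      induction I using Finset.induction_on with
      | empty =>
          simp only [Finset.sdiff_empty]
          refine convexHull_mono (fun y hy => ?_) (key ⟨0, hd⟩)
          obtain ⟨j, -, rfl⟩ := hy
          simp
      | insert i I' hni ih =>
          have h1 : x ∈ convexHull ℝ (↑((Finset.univ.erase i).image v) : Set (EuclideanSpace ℝ (Fin d))) := by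
            rw [hcoe]; exact key i
          have hint := hS.convexHull_inter
            (Finset.image_subset_image ((Finset.univ \ I').subset_univ))
            (Finset.image_subset_image ((Finset.univ.erase i).subset_univ))
          have hmem : x ∈ convexHull ℝ ((((Finset.univ \ I').image v) ∩ ((Finset.univ.erase i).image v) : Finset _) : Set (EuclideanSpace ℝ (Fin d))) := by
            rw [Finset.coe_inter, hint]; exact ⟨ih, h1⟩
          have himg : ((Finset.univ \ I').image v) ∩ ((Finset.univ.erase i).image v) = ((Finset.univ \ I') ∩ (Finset.univ.erase i)).image v :=
            (Finset.image_inter _ _ hvinj).symm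
          have hset : (Finset.univ \ I') ∩ (Finset.univ.erase i) = Finset.univ \ insert i I' := by
            ext j
            simp [and_comm, eq_comm, not_or]
          rwa [himg, hset] at hmem
    have := claim Finset.univ
    simp at this
end

section
/- Let v₁,…,v_d, u₁, u₂ be the lower-bound configuration in ℝ^d (simplex plus two apex points). Suppose p₁ is a convex combination of vertices v₁,…,v_k with all coefficients positive (k ≥ 2), and p₂ is a convex combination of vertices v_{k+1},…,v_{k+k'} with all coefficients positive (k' ≥ 2), for disjoint index sets. Then the convex set A := conv({v₂,…,v_k} ∪ {v_{k+2},…,v_{k+k'}} ∪ {v_{k+k'+1},…,v_d} ∪ {u₁,u₂}) contains exactly d points of the configuration and contains neither p₁ nor p₂. -/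
open RealInnerProductSpace

/-- in the simplex-plus-two-apexes configuration, if `p₁` is a
positive convex combination of the first `k ≥ 2` vertices and `p₂` a positive
convex combination of the next `k' ≥ 2` vertices, then the convex hull `A` of all
configuration points except `v₁` and `v_{k+1}` (i.e. the first vertex of each
group) contains exactly `d` configuration points and contains neither `p₁` nor
`p₂`. -/
theorem avoid_two_combinations {d : ℕ} (hd : 2 ≤ d)
    (v : Fin d → EuclideanSpace ℝ (Fin d)) (hv : AffineIndependent ℝ v)
    (w : EuclideanSpace ℝ (Fin d)) (hw : w ≠ 0) (c : ℝ)
    (hvH : ∀ i, ∑ j, w j * v i j = c)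
    (u₁ u₂ : EuclideanSpace ℝ (Fin d)) (t₁ t₂ : ℝ) (ht₁ : 0 < t₁) (ht₂ : 0 < t₂)
    (hu₁ : u₁ = ((d : ℝ)⁻¹ • ∑ i, v i) + t₁ • w)
    (hu₂ : u₂ = ((d : ℝ)⁻¹ • ∑ i, v i) - t₂ • w)
    (k k' : ℕ) (hk : 2 ≤ k) (hk' : 2 ≤ k') (hkk' : k + k' ≤ d)
    (p₁ p₂ : EuclideanSpace ℝ (Fin d)) (w₁ w₂ : Fin d → ℝ)
    (hw₁pos : ∀ i ∈ Finset.univ.filter (fun i : Fin d => (i : ℕ) < k), 0 < w₁ i)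
    (hw₁sum : ∑ i ∈ Finset.univ.filter (fun i : Fin d => (i : ℕ) < k), w₁ i = 1)
    (hp₁ : p₁ = ∑ i ∈ Finset.univ.filter (fun i : Fin d => (i : ℕ) < k), w₁ i • v i)
    (hw₂pos : ∀ i ∈ Finset.univ.filter
      (fun i : Fin d => k ≤ (i : ℕ) ∧ (i : ℕ) < k + k'), 0 < w₂ i)
    (hw₂sum : ∑ i ∈ Finset.univ.filter
      (fun i : Fin d => k ≤ (i : ℕ) ∧ (i : ℕ) < k + k'), w₂ i = 1)
    (hp₂ : p₂ = ∑ i ∈ Finset.univ.filter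
      (fun i : Fin d => k ≤ (i : ℕ) ∧ (i : ℕ) < k + k'), w₂ i • v i)
    (A : Set (EuclideanSpace ℝ (Fin d)))
    (hA : A = convexHull ℝ
      ((v '' {i | (i : ℕ) ≠ 0 ∧ (i : ℕ) ≠ k}) ∪ {u₁, u₂})) :
    ((insert u₁ (insert u₂ (Set.range v))) ∩ A).ncard = d ∧ p₁ ∉ A ∧ p₂ ∉ A := by
  have hkd : k < d := by omega
  have hd0 : 0 < d := by omega
  set Z : Fin d := ⟨0, hd0⟩ with hZ
  set K : Fin d := ⟨k, hkd⟩ with hK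
  have hZK : Z ≠ K := by
    simp only [hZ, hK, Fin.mk.injEq, Ne]
    omega
  -- inner product facts
  have hinner : ∀ x : EuclideanSpace ℝ (Fin d), ⟪w, x⟫ = ∑ j, w j * x j := by
    intro x
    simp [PiLp.inner_apply, RCLike.inner_apply, starRingEnd_apply]
    exact Finset.sum_congr rfl (fun _ _ => mul_comm _ _)
  have hipw : 0 < ⟪w, w⟫ := by
    rw [real_inner_self_eq_norm_sq]
    have h0 : 0 < ‖w‖ := norm_pos_iff.mpr hw
    positivity
  have hfv : ∀ i, ⟪w, v i⟫ = c := fun i => (hinner _).trans (hvH i)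
  have hfcomb : ∀ a : Fin d → ℝ, (∑ j, a j) = 1 → ⟪w, ∑ j, a j • v j⟫ = c := by
    intro a ha
    rw [inner_sum]
    simp only [real_inner_smul_right, hfv]
    rw [← Finset.sum_mul, ha, one_mul]
  have hconst : (∑ _j : Fin d, (d : ℝ)⁻¹) = 1 := by
    simp only [Finset.sum_const, Finset.card_univ, Fintype.card_fin, nsmul_eq_mul]
    field_simp
  have hcent : ((d : ℝ)⁻¹ • ∑ i, v i) = ∑ j, (d : ℝ)⁻¹ • v j := by
    rw [Finset.smul_sum]
  -- the enveloping convex set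
  set S : Set (EuclideanSpace ℝ (Fin d)) :=
    {x | ∃ b : Fin d → ℝ, ∃ s : ℝ, (∑ j, b j) = 1 ∧ b Z = b K ∧
      x = (∑ j, b j • v j) + s • w} with hS
  have hconv : Convex ℝ S := by
    rintro x ⟨b, s, hb1, hbk, rfl⟩ y ⟨b', s', hb'1, hb'k, rfl⟩ p q hp hq hpq
    refine ⟨fun j => p * b j + q * b' j, p * s + q * s', ?_, ?_, ?_⟩
    · rw [Finset.sum_add_distrib, ← Finset.mul_sum, ← Finset.mul_sum, hb1, hb'1]
      linarith
    · show p * b Z + q * b' Z = p * b K + q * b' K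
      rw [hbk, hb'k]
    · simp only [add_smul, mul_smul, Finset.sum_add_distrib, smul_add, Finset.smul_sum]
      abel
  have hAS : A ⊆ S := by
    rw [hA]
    refine convexHull_min ?_ hconv
    rintro x (⟨i, hi, rfl⟩ | hx)
    · refine ⟨fun j => if j = i then 1 else 0, 0, by simp, ?_, by simp⟩
      have h1 : Z ≠ i := by
        intro h; exact hi.1 (by rw [← h])
      have h2 : K ≠ i := by
        intro h; exact hi.2 (by rw [← h])
      simp [h1, h2]
    · rcases hx with rfl | rfl
      · exact ⟨fun _ => (d : ℝ)⁻¹, t₁, hconst, rfl, by rw [hu₁, hcent]⟩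
      · refine ⟨fun _ => (d : ℝ)⁻¹, -t₂, hconst, rfl, ?_⟩
        rw [hu₂, hcent, neg_smul, sub_eq_add_neg]
  -- key exclusion lemma
  have key : ∀ a : Fin d → ℝ, (∑ j, a j) = 1 → a Z ≠ a K → (∑ j, a j • v j) ∉ S := by
    rintro a ha hne ⟨b, s, hb1, hbk, heq⟩
    have h1 : ⟪w, ∑ j, a j • v j⟫ = c := hfcomb a ha
    have h2 : ⟪w, ∑ j, a j • v j⟫ = c + s * ⟪w, w⟫ := by
      rw [heq, inner_add_right, hfcomb b hb1, real_inner_smul_right]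
    have hs : s = 0 := by
      have h3 := h1.symm.trans h2
      have h4 : s * ⟪w, w⟫ = 0 := by linarith
      rcases mul_eq_zero.mp h4 with h | h
      · exact h
      · exact absurd h (ne_of_gt hipw)
    rw [hs, zero_smul, add_zero] at heq
    have hab : a = b := by
      refine (affineIndependent_iff_eq_of_fintype_affineCombination_eq ℝ v).mp hv a b ha hb1 ?_
      rw [Finset.univ.affineCombination_eq_linear_combination v a ha,
          Finset.univ.affineCombination_eq_linear_combination v b hb1, heq]
    exact hne (by rw [hab, hbk])
  -- the four exclusions
  have hvZ : v Z ∉ A := by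
    intro h
    have hsum : (∑ j, (if j = Z then (1 : ℝ) else 0) • v j) = v Z := by simp
    exact key (fun j => if j = Z then 1 else 0) (by simp)
      (by simp [hZK.symm]) (hsum ▸ hAS h)
  have hvK : v K ∉ A := by
    intro h
    have hsum : (∑ j, (if j = K then (1 : ℝ) else 0) • v j) = v K := by simp
    exact key (fun j => if j = K then 1 else 0) (by simp)
      (by simp [hZK]) (hsum ▸ hAS h)
  have hp1 : p₁ ∉ A := by
    intro h
    have hrep : p₁ = ∑ j : Fin d, (if (j : ℕ) < k then w₁ j else 0) • v j := by
      rw [hp₁, Finset.sum_filter]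
      simp [ite_smul]
    have hsum : (∑ j : Fin d, if (j : ℕ) < k then w₁ j else 0) = 1 := by
      rw [← hw₁sum, Finset.sum_filter]
    have hZpos : 0 < w₁ Z := hw₁pos Z (by simp [hZ]; omega)
    refine key (fun j : Fin d => if (j : ℕ) < k then w₁ j else 0) hsum ?_ (hrep ▸ hAS h)
    have e1 : ((Z : Fin d) : ℕ) < k := by simp [hZ]; omega
    have e2 : ¬ ((K : Fin d) : ℕ) < k := by simp [hK]
    simp only [if_pos e1, if_neg e2]
    exact ne_of_gt hZpos
  have hp2 : p₂ ∉ A := by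
    intro h
    have hrep : p₂ = ∑ j : Fin d, (if k ≤ (j : ℕ) ∧ (j : ℕ) < k + k' then w₂ j else 0) • v j := by
      rw [hp₂, Finset.sum_filter]
      simp [ite_smul]
    have hsum : (∑ j : Fin d, if k ≤ (j : ℕ) ∧ (j : ℕ) < k + k' then w₂ j else 0) = 1 := by
      rw [← hw₂sum, Finset.sum_filter]
    have hKpos : 0 < w₂ K := hw₂pos K (by simp [hK]; omega)
    refine key (fun j : Fin d => if k ≤ (j : ℕ) ∧ (j : ℕ) < k + k' then w₂ j else 0) hsum ?_
      (hrep ▸ hAS h)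
    have e1 : ¬ (k ≤ ((Z : Fin d) : ℕ) ∧ ((Z : Fin d) : ℕ) < k + k') := by
      simp [hZ]; omega
    have e2 : k ≤ ((K : Fin d) : ℕ) ∧ ((K : Fin d) : ℕ) < k + k' := by
      simp [hK]; omega
    simp only [if_neg e1, if_pos e2]
    exact (ne_of_gt hKpos).symm
  -- memberships
  have hu₁A : u₁ ∈ A := by
    rw [hA]; exact subset_convexHull ℝ _ (Or.inr (Or.inl rfl))
  have hu₂A : u₂ ∈ A := by
    rw [hA]; exact subset_convexHull ℝ _ (Or.inr (Or.inr rfl))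
  have hviA : ∀ i : Fin d, i ≠ Z → i ≠ K → v i ∈ A := by
    intro i h1 h2
    rw [hA]
    refine subset_convexHull ℝ _ (Or.inl ⟨i, ⟨?_, ?_⟩, rfl⟩)
    · intro h; exact h1 (by simp only [hZ, Fin.ext_iff]; exact h)
    · intro h; exact h2 (by simp only [hK, Fin.ext_iff]; exact h)
  -- distinctness facts
  have hg : ⟪w, ((d : ℝ)⁻¹ • ∑ i, v i)⟫ = c := by
    rw [hcent]; exact hfcomb (fun _ => (d : ℝ)⁻¹) hconst
  have hfu₁ : ⟪w, u₁⟫ = c + t₁ * ⟪w, w⟫ := by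
    rw [hu₁, inner_add_right, hg, real_inner_smul_right]
  have hfu₂ : ⟪w, u₂⟫ = c - t₂ * ⟪w, w⟫ := by
    rw [hu₂, inner_sub_right, hg, real_inner_smul_right]
  have hu₁r : u₁ ∉ Set.range v := by
    rintro ⟨i, rfl⟩
    have := (hfv i).symm.trans hfu₁
    nlinarith
  have hu₂r : u₂ ∉ Set.range v := by
    rintro ⟨i, rfl⟩
    have := (hfv i).symm.trans hfu₂
    nlinarith
  have hu12 : u₁ ≠ u₂ := by
    intro h
    have := (hfu₁.symm.trans (h ▸ hfu₂))
    nlinarith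
  -- the intersection set
  have hset : (insert u₁ (insert u₂ (Set.range v))) ∩ A
      = {u₁, u₂} ∪ (v '' {i | i ≠ Z ∧ i ≠ K}) := by
    ext x
    constructor
    · rintro ⟨hx1, hx2⟩
      rcases hx1 with rfl | rfl | ⟨i, rfl⟩
      · exact Or.inl (Or.inl rfl)
      · exact Or.inl (Or.inr rfl)
      · refine Or.inr ⟨i, ⟨?_, ?_⟩, rfl⟩
        · rintro rfl; exact hvZ hx2
        · rintro rfl; exact hvK hx2
    · rintro ((rfl | rfl) | ⟨i, ⟨hi1, hi2⟩, rfl⟩)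
      · exact ⟨Or.inl rfl, hu₁A⟩
      · exact ⟨Or.inr (Or.inl rfl), hu₂A⟩
      · exact ⟨Or.inr (Or.inr ⟨i, rfl⟩), hviA i hi1 hi2⟩
  refine ⟨?_, hp1, hp2⟩
  rw [hset]
  have hdisj : Disjoint ({u₁, u₂} : Set (EuclideanSpace ℝ (Fin d)))
      (v '' {i | i ≠ Z ∧ i ≠ K}) := by
    rw [Set.disjoint_left]
    rintro x (rfl | rfl) ⟨i, _, h⟩
    · exact hu₁r ⟨i, h⟩
    · exact hu₂r ⟨i, h⟩
  have hfin1 : ({u₁, u₂} : Set (EuclideanSpace ℝ (Fin d))).Finite := Set.toFinite _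
  have hfin2 : (v '' {i | i ≠ Z ∧ i ≠ K}).Finite := Set.toFinite _
  rw [Set.ncard_union_eq hdisj hfin1 hfin2, Set.ncard_pair hu12,
    Set.ncard_image_of_injective _ hv.injective]
  have hsetF : {i : Fin d | i ≠ Z ∧ i ≠ K}
      = ↑((Finset.univ : Finset (Fin d)) \ {Z, K}) := by
    ext i
    simp [not_or]
  rw [hsetF, Set.ncard_coe_finset, Finset.card_sdiff_of_subset (by simp)]
  have hcard2 : ({Z, K} : Finset (Fin d)).card = 2 := by
    rw [Finset.card_insert_of_notMem (by simp [hZK]), Finset.card_singleton]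
  rw [hcard2]
  simp only [Finset.card_univ, Fintype.card_fin]
  omega
end

section
/- Let P be a set of n points in general position in ℝ^d and let 0 < ε₁ ≤ ε₂ < 1 satisfy ε₁ ≥ 3^{d−1}/(2·3^{d−1}+1) and ε₁ + ε₂ ≥ 1. Then there exist two points p₁, p₂ ∈ ℝ^d such that every axis-parallel box containing more than ε₁·n points of P contains at least one of p₁, p₂, and every axis-parallel box containing more than ε₂·n points of P contains both. -/
/-- `B` is a compact axis-parallel box in `ℝ^d`: a product of closed intervals. -/
def IsBox {d : ℕ} (B : Set (EuclideanSpace ℝ (Fin d))) : Prop :=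
  ∃ a b : Fin d → ℝ, B = {x | ∀ i, x i ∈ Set.Icc (a i) (b i)}

/-- General position with respect to axis-parallel boxes: distinct points of `P`
differ in every coordinate. -/
def GeneralPositionBoxes {d : ℕ} (P : Finset (EuclideanSpace ℝ (Fin d))) : Prop :=
  ∀ p ∈ P, ∀ q ∈ P, p ≠ q → ∀ i, p i ≠ q i

noncomputable section
open scoped Classical

namespace WNB


variable {d : ℕ}

abbrev Pt (d : ℕ) := EuclideanSpace ℝ (Fin d)

lemma ptsIn_eq_card (P : Finset (Pt d)) (C : Set (Pt d)) :
    ptsIn P C = (P.filter (fun x => x ∈ C)).card := by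
  rw [ptsIn]
  have : (P : Set (Pt d)) ∩ C = ((P.filter (fun x => x ∈ C) : Finset (Pt d)) : Set (Pt d)) := by
    ext x; simp [Finset.mem_filter, and_comm]
  rw [this, Set.ncard_coe_finset]

def box (a b : Fin d → ℝ) : Set (Pt d) := {x | ∀ i, x i ∈ Set.Icc (a i) (b i)}

lemma lower_count {P : Finset (Pt d)} {n : ℕ} (hn : P.card = n) {ε : ℝ} (hε : 0 ≤ ε)
    {B : Set (Pt d)} (h : (ptsIn P B : ℝ) > ε * n) :
    ⌊ε * n⌋₊ + 1 ≤ (P.filter (fun x => x ∈ B)).card := by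
  rw [ptsIn_eq_card] at h
  have h0 : (0:ℝ) ≤ ε * n := by positivity
  have := Nat.floor_le h0
  have : (⌊ε * n⌋₊ : ℝ) < ((P.filter (fun x => x ∈ B)).card : ℝ) := lt_of_le_of_lt this h
  exact_mod_cast this

lemma boxes_intersect {P : Finset (Pt d)} {n : ℕ} (hn : P.card = n) {ε₁ : ℝ} (hε : 0 ≤ ε₁)
    (hcase : n ≤ 2 * ⌊ε₁ * n⌋₊ + 1)
    {B B' : Set (Pt d)} (h : (ptsIn P B : ℝ) > ε₁ * n) (h' : (ptsIn P B' : ℝ) > ε₁ * n) :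
    ∃ x ∈ P, x ∈ B ∧ x ∈ B' := by
  have h1 := lower_count hn hε h
  have h2 := lower_count hn hε h'
  set A := P.filter (fun x => x ∈ B)
  set A' := P.filter (fun x => x ∈ B')
  have hu : (A ∪ A').card ≤ n := by
    rw [← hn]; exact Finset.card_le_card (by
      intro x hx; rcases Finset.mem_union.mp hx with hx | hx <;>
        exact (Finset.mem_filter.mp hx).1)
  by_contra hno
  push_neg at hno
  have hdis : Disjoint A A' := Finset.disjoint_left.mpr (by
    intro x hxA hxA'
    exact hno x (Finset.mem_filter.mp hxA).1 (Finset.mem_filter.mp hxA).2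
      (Finset.mem_filter.mp hxA').2)
  have hsum : A.card + A'.card ≤ n := by
    rw [← Finset.card_union_of_disjoint hdis]; exact hu
  omega

lemma helly_case (P : Finset (Pt d)) (n : ℕ) (hn : P.card = n)
    (ε₁ ε₂ : ℝ) (hε₁ : 0 ≤ ε₁) (hε₁₂ : ε₁ ≤ ε₂)
    (hcase : n ≤ 2 * ⌊ε₁ * n⌋₊ + 1) :
    ∃ p₁ p₂ : Pt d,
      (∀ B : Set (Pt d), IsBox B → (ptsIn P B : ℝ) > ε₁ * n → p₁ ∈ B ∨ p₂ ∈ B) ∧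
      (∀ B : Set (Pt d), IsBox B → (ptsIn P B : ℝ) > ε₂ * n → p₁ ∈ B ∧ p₂ ∈ B) := by
  classical
  set 𝒞 : Set ((Fin d → ℝ) × (Fin d → ℝ)) :=
    {c | (ptsIn P (box c.1 c.2) : ℝ) > ε₁ * n} with h𝒞
  have hε₁₂n : ∀ B : Set (Pt d), (ptsIn P B : ℝ) > ε₂ * n → (ptsIn P B : ℝ) > ε₁ * n := by
    intro B h
    exact lt_of_le_of_lt (by
      have : ε₁ * n ≤ ε₂ * n := mul_le_mul_of_nonneg_right hε₁₂ (Nat.cast_nonneg n)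
      exact this) h
  by_cases hne : 𝒞.Nonempty
  · obtain ⟨c₀, hc₀⟩ := hne
    -- key cross inequality
    have cross : ∀ c ∈ 𝒞, ∀ c' ∈ 𝒞, ∀ i, c.1 i ≤ c'.2 i := by
      intro c hc c' hc' i
      obtain ⟨x, _, hxB, hxB'⟩ := boxes_intersect hn hε₁ hcase hc hc'
      exact le_trans (hxB i).1 (hxB' i).2
    set p : Pt d := WithLp.toLp 2 (fun i => sInf {r | ∃ c ∈ 𝒞, c.2 i = r}) with hp
    have hmem : ∀ c ∈ 𝒞, p ∈ box c.1 c.2 := by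
      intro c hc i
      have hne' : {r | ∃ c ∈ 𝒞, c.2 i = r}.Nonempty := ⟨c.2 i, c, hc, rfl⟩
      have hbdd : BddBelow {r | ∃ c ∈ 𝒞, c.2 i = r} := by
        refine ⟨c₀.1 i, ?_⟩
        rintro r ⟨c', hc', rfl⟩
        exact cross c₀ hc₀ c' hc' i
      constructor
      · refine le_csInf hne' ?_
        rintro r ⟨c', hc', rfl⟩
        exact cross c hc c' hc' i
      · exact csInf_le hbdd ⟨c, hc, rfl⟩
    have main : ∀ B : Set (Pt d), IsBox B → (ptsIn P B : ℝ) > ε₁ * n → p ∈ B := by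
      rintro B ⟨a, b, rfl⟩ h
      exact hmem (a, b) h
    exact ⟨p, p, fun B hB h => Or.inl (main B hB h),
      fun B hB h => ⟨main B hB (hε₁₂n B h), main B hB (hε₁₂n B h)⟩⟩
  · refine ⟨0, 0, ?_, ?_⟩
    · rintro B ⟨a, b, rfl⟩ h
      exact (hne ⟨(a, b), h⟩).elim
    · rintro B ⟨a, b, rfl⟩ h
      exact (hne ⟨(a, b), hε₁₂n _ h⟩).elim



lemma not_mem_box {d : ℕ} {a b : Fin d → ℝ} {p : Pt d} (h : p ∉ box a b) :
    ∃ i, p i < a i ∨ b i < p i := by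
  by_contra hc
  push_neg at hc
  exact h (fun i => ⟨(hc i).1, (hc i).2⟩)

lemma ptsIn_le_of_subset : True := trivial

lemma order_stat (P : Finset β) (f : β → ℝ)
    (hinj : ∀ x ∈ P, ∀ y ∈ P, x ≠ y → f x ≠ f y)
    (k : ℕ) (hk1 : 1 ≤ k) (hkn : k ≤ P.card) :
    ∃ (E : Finset β) (τ : ℝ), E ⊆ P ∧ E.card = k ∧
      (P.filter (fun x => f x < τ)).card = k - 1 ∧
      P.filter (fun x => τ < f x) = P \ E := by
  classical
  set n := P.card with hn
  set rank : β → ℕ := fun x => (P.filter (fun y => f y ≤ f x)).card with hrank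
  have hmono : ∀ x ∈ P, ∀ y ∈ P, f x < f y → rank x < rank y := by
    intro x hx y hy hxy
    apply Finset.card_lt_card
    constructor
    · intro z hz
      simp only [Finset.mem_filter] at hz ⊢
      exact ⟨hz.1, le_of_lt (lt_of_le_of_lt hz.2 hxy)⟩
    · intro hsub
      have hy' : y ∈ P.filter (fun z => f z ≤ f y) := by
        simp [Finset.mem_filter, hy]
      have := hsub hy'
      simp only [Finset.mem_filter] at this
      exact absurd (lt_of_le_of_lt this.2 hxy) (lt_irrefl _)
  have hmono' : ∀ x ∈ P, ∀ y ∈ P, rank x < rank y → f x < f y := by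
    intro x hx y hy hr
    rcases lt_trichotomy (f x) (f y) with h | h | h
    · exact h
    · exfalso
      have : x = y := by
        by_contra hne
        exact hinj x hx y hy hne h
      subst this; exact absurd hr (lt_irrefl _)
    · exact absurd (lt_trans (hmono y hy x hx h) hr) (lt_irrefl _)
  have hrinj : Set.InjOn rank P := by
    intro x hx y hy hxy
    by_contra hne
    have hfne := hinj x hx y hy hne
    rcases lt_trichotomy (f x) (f y) with h | h | h
    · exact absurd hxy (Nat.ne_of_lt (hmono x hx y hy h))
    · exact hfne h
    · exact absurd hxy.symm (Nat.ne_of_lt (hmono y hy x hx h))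
  have himg : P.image rank = Finset.Icc 1 n := by
    apply Finset.eq_of_subset_of_card_le
    · intro m hm
      simp only [Finset.mem_image] at hm
      obtain ⟨x, hx, rfl⟩ := hm
      simp only [Finset.mem_Icc]
      constructor
      · apply Finset.card_pos.mpr
        exact ⟨x, by simp [Finset.mem_filter, hx]⟩
      · exact le_trans (Finset.card_le_card (Finset.filter_subset _ _)) le_rfl
    · rw [Nat.card_Icc]
      rw [Finset.card_image_of_injOn hrinj]
      omega
  set E : Finset β := P.filter (fun x => rank x ≤ k) with hE
  have hEsub : E ⊆ P := Finset.filter_subset _ _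
  have hEcard : E.card = k := by
    have hinj2 : Set.InjOn rank E := hrinj.mono (by rw [hE]; exact Finset.filter_subset _ _)
    have h1 : (E.image rank).card = E.card := Finset.card_image_of_injOn hinj2
    have h2 : E.image rank = (Finset.Icc 1 n).filter (fun m => m ≤ k) := by
      ext m
      simp only [Finset.mem_image, Finset.mem_filter, Finset.mem_Icc, hE]
      constructor
      · rintro ⟨x, ⟨hx1, hx2⟩, rfl⟩
        have hp1 : 1 ≤ rank x := Finset.card_pos.mpr ⟨x, by
          simp only [Finset.mem_filter]; exact ⟨hx1, le_rfl⟩⟩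
        have hpn : rank x ≤ n := Finset.card_le_card (Finset.filter_subset _ _)
        exact ⟨⟨hp1, hpn⟩, hx2⟩
      · rintro ⟨⟨hp1, hp2⟩, hm⟩
        have : m ∈ P.image rank := by rw [himg]; simp only [Finset.mem_Icc]; omega
        obtain ⟨x, hx, rfl⟩ := Finset.mem_image.mp this
        exact ⟨x, ⟨hx, hm⟩, rfl⟩
    have h3 : ((Finset.Icc 1 n).filter (fun m => m ≤ k)).card = k := by
      have he : (Finset.Icc 1 n).filter (fun m => m ≤ k) = Finset.Icc 1 k := by
        ext m; simp only [Finset.mem_filter, Finset.mem_Icc]; omega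
      rw [he, Nat.card_Icc]; omega
    rw [← h1, h2, h3]
  have hEne : E.Nonempty := Finset.card_pos.mp (by omega)
  have hfne : (E.image f).Nonempty := hEne.image f
  set τ : ℝ := (E.image f).max' hfne with hτ
  obtain ⟨w, hwE, hwf⟩ := Finset.mem_image.mp ((E.image f).max'_mem hfne)
  have hmax : ∀ x ∈ E, f x ≤ τ := fun x hx =>
    Finset.le_max' _ _ (Finset.mem_image_of_mem f hx)
  have houtside : ∀ x ∈ P, x ∉ E → τ < f x := by
    intro x hx hxE
    have hrx : k < rank x := by
      by_contra hc
      exact hxE (by simp [hE, Finset.mem_filter, hx]; omega)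
    have hrw : rank w ≤ k := (Finset.mem_filter.mp hwE).2
    have : f w < f x := hmono' w (hEsub hwE) x hx (by omega)
    rw [hτ, ← hwf]
    exact this
  constructor
  constructor
  refine ⟨hEsub, hEcard, ?_, ?_⟩
  · -- strict-below count = k - 1
    have h1 : P.filter (fun x => f x < τ) = E.erase w := by
      ext x
      simp only [Finset.mem_filter, Finset.mem_erase]
      constructor
      · rintro ⟨hx, hlt⟩
        have hxE : x ∈ E := by
          by_contra hxE
          exact absurd (lt_trans (houtside x hx hxE) hlt) (lt_irrefl _)
        refine ⟨?_, hxE⟩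
        rintro rfl
        rw [hwf] at hlt
        exact absurd hlt (lt_irrefl _)
      · rintro ⟨hne, hxE⟩
        refine ⟨hEsub hxE, ?_⟩
        rcases lt_or_eq_of_le (hmax x hxE) with h | h
        · exact h
        · exfalso
          exact hinj x (hEsub hxE) w (hEsub hwE) hne (by rw [h, hwf])
    rw [h1, Finset.card_erase_of_mem hwE, hEcard]
  · ext x
    simp only [Finset.mem_filter, Finset.mem_sdiff]
    constructor
    · rintro ⟨hx, hlt⟩
      refine ⟨hx, fun hxE => absurd (lt_of_lt_of_le hlt (hmax x hxE)) (lt_irrefl _)⟩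
    · rintro ⟨hx, hxE⟩
      exact ⟨hx, houtside x hx hxE⟩


section Reach

variable {α : Type*} [Fintype α] (r : α → α → Prop)

def nbhd (s : Finset α) : Finset α :=
  s ∪ Finset.univ.filter (fun y => ∃ x ∈ s, r x y)

def reachN (x : α) : ℕ → Finset α
  | 0 => {x}
  | (n+1) => nbhd r (reachN x n)

def RClosed (s : Finset α) : Prop := ∀ x ∈ s, ∀ y, r x y → y ∈ s

def Reach (x y : α) : Prop := y ∈ reachN r x (Fintype.card α)

variable {r}

lemma subset_nbhd {s : Finset α} : s ⊆ nbhd r s := Finset.subset_union_left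

lemma mem_nbhd_of_step {s : Finset α} {x y : α} (hx : x ∈ s) (h : r x y) :
    y ∈ nbhd r s := by
  apply Finset.mem_union_right
  simp only [Finset.mem_filter, Finset.mem_univ, true_and]
  exact ⟨x, hx, h⟩

lemma nbhd_eq_of_closed {s : Finset α} (h : RClosed r s) : nbhd r s = s := by
  apply Finset.Subset.antisymm _ subset_nbhd
  intro y hy
  rcases Finset.mem_union.mp hy with hy | hy
  · exact hy
  · simp only [Finset.mem_filter, Finset.mem_univ, true_and] at hy
    obtain ⟨x, hx, hr⟩ := hy
    exact h x hx y hr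

lemma closed_of_nbhd_eq {s : Finset α} (h : nbhd r s = s) : RClosed r s := by
  intro x hx y hr
  rw [← h]
  exact mem_nbhd_of_step hx hr

lemma reachN_mono {x : α} : ∀ n, reachN r x n ⊆ reachN r x (n+1) := by
  intro n
  exact subset_nbhd

lemma self_mem_reachN {x : α} : ∀ n, x ∈ reachN r x n := by
  intro n
  induction n with
  | zero => simp [reachN]
  | succ n ih => exact subset_nbhd ih

lemma reachN_stable {x : α} {j : ℕ} (h : reachN r x (j+1) = reachN r x j) :
    ∀ i, j ≤ i → reachN r x i = reachN r x j := by
  intro i hi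
  induction i with
  | zero => have hj0 : j = 0 := by omega
            rw [hj0]
  | succ i ih =>
    rcases Nat.lt_or_ge j (i+1) with hlt | hge
    · have hji : j ≤ i := by omega
      have := ih hji
      show nbhd r (reachN r x i) = _
      rw [this]
      exact h
    · have : j = i + 1 := by omega
      rw [this]

lemma reach_closed (x : α) : RClosed r (reachN r x (Fintype.card α)) := by
  set N := Fintype.card α with hN
  by_cases hex : ∃ j, j < N ∧ reachN r x (j+1) = reachN r x j
  · obtain ⟨j, hj, hstab⟩ := hex
    have h1 := reachN_stable hstab N (by omega)
    have h2 := reachN_stable hstab (N+1) (by omega)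
    apply closed_of_nbhd_eq
    show reachN r x (N+1) = reachN r x N
    rw [h1, h2]
  · push_neg at hex
    -- sizes strictly increase, contradiction
    exfalso
    have hgrow : ∀ j, j ≤ N → j + 1 ≤ (reachN r x j).card := by
      intro j hj
      induction j with
      | zero => simp [reachN]
      | succ j ih =>
        have hj' : j ≤ N := by omega
        have hne := hex j (by omega)
        have hsub : reachN r x j ⊆ reachN r x (j+1) := reachN_mono j
        have hss : reachN r x j ⊂ reachN r x (j+1) :=
          Finset.ssubset_iff_subset_ne.mpr ⟨hsub, fun h => hne h.symm⟩
        have := Finset.card_lt_card hss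
        have := ih hj'
        omega
    have := hgrow N le_rfl
    have hle : (reachN r x N).card ≤ N := by
      rw [hN]; exact Finset.card_le_univ _
    omega

lemma reach_refl (x : α) : Reach r x x := self_mem_reachN _

lemma reach_step {x y z : α} (h : Reach r x y) (hr : r y z) : Reach r x z :=
  reach_closed x y h z hr

lemma reachN_subset_closed {y : α} {s : Finset α} (hy : y ∈ s) (hs : RClosed r s) :
    ∀ n, reachN r y n ⊆ s := by
  intro n
  induction n with
  | zero => simp [reachN]; exact hy
  | succ n ih =>
    intro z hz
    rcases Finset.mem_union.mp hz with hz | hz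
    · exact ih hz
    · simp only [Finset.mem_filter, Finset.mem_univ, true_and] at hz
      obtain ⟨w, hw, hr⟩ := hz
      exact hs w (ih hw) z hr

lemma reach_trans {x y z : α} (h1 : Reach r x y) (h2 : Reach r y z) : Reach r x z :=
  reachN_subset_closed h1 (reach_closed x) _ h2

lemma reach_symm (hsym : ∀ a b, r a b → r b a) {x y : α} (h : Reach r x y) :
    Reach r y x := by
  have key : ∀ n, ∀ y ∈ reachN r x n, Reach r y x := by
    intro n
    induction n with
    | zero => intro y hy; simp [reachN] at hy; subst hy; exact reach_refl y
    | succ n ih =>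
      intro y hy
      rcases Finset.mem_union.mp hy with hy | hy
      · exact ih y hy
      · simp only [Finset.mem_filter, Finset.mem_univ, true_and] at hy
        obtain ⟨z, hz, hr⟩ := hy
        exact reach_trans (reach_step (reach_refl y) (hsym z y hr)) (ih z hz)
  exact key _ y h

lemma reach_extract {x y : α} (h : Reach r x y) :
    ∃ ℓ, ∃ w : ℕ → α, w 0 = x ∧ w ℓ = y ∧ ∀ j < ℓ, r (w j) (w (j+1)) := by
  have key : ∀ n, ∀ y ∈ reachN r x n,
      ∃ ℓ, ∃ w : ℕ → α, w 0 = x ∧ w ℓ = y ∧ ∀ j < ℓ, r (w j) (w (j+1)) := by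
    intro n
    induction n with
    | zero =>
      intro y hy; simp [reachN] at hy
      exact ⟨0, fun _ => y, by simp [hy], rfl, by omega⟩
    | succ n ih =>
      intro y hy
      rcases Finset.mem_union.mp hy with hy | hy
      · exact ih y hy
      · simp only [Finset.mem_filter, Finset.mem_univ, true_and] at hy
        obtain ⟨z, hz, hr⟩ := hy
        obtain ⟨ℓ, w, hw0, hwl, hstep⟩ := ih z hz
        refine ⟨ℓ+1, fun i => if i = ℓ+1 then y else w i, ?_, ?_, ?_⟩
        · simp [hw0]
        · simp
        · intro j hj
          rcases Nat.lt_or_ge j ℓ with hlt | hge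
          · simpa [Nat.ne_of_lt (by omega : j < ℓ+1), Nat.ne_of_lt (by omega : j+1 < ℓ+1), Nat.ne_of_lt (by omega : j < ℓ)]
              using hstep j hlt
          · have hjeq : j = ℓ := by omega
            subst hjeq
            simpa [Nat.ne_of_lt (by omega : j < j+1), hwl] using hr
  exact key _ y h

end Reach

section Sigma

variable {β : Type*} {D : ℕ}

abbrev Pole (D : ℕ) := Fin D × Bool

def ap (X : Pole D) : Pole D := (X.1, !X.2)

lemma ap_ap (X : Pole D) : ap (ap X) = X := by simp [ap]

variable (E : Pole D → Finset β) (k S : ℕ)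

def bad (X Y : Pole D) : Prop := k < (E X ∩ E Y).card + S

lemma bad_symm {X Y : Pole D} (h : bad E k S X Y) : bad E k S Y X := by
  rwa [bad, Finset.inter_comm]

def dstep (u v : Pole D × Bool) : Prop :=
  (v.1 = ap u.1 ∧ v.2 = !u.2) ∨ (bad E k S u.1 v.1 ∧ v.2 = u.2)

lemma dstep_symm {u v : Pole D × Bool} (h : dstep E k S u v) : dstep E k S v u := by
  rcases h with ⟨h1, h2⟩ | ⟨h1, h2⟩
  · exact Or.inl ⟨by rw [h1, ap_ap], by rw [h2, Bool.not_not]⟩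
  · exact Or.inr ⟨bad_symm E k S h1, h2.symm⟩

def IsWalk (ℓ : ℕ) (w : ℕ → Pole D × Bool) : Prop :=
  ∀ j < ℓ, dstep E k S (w j) (w (j+1))

variable {E k S}
variable {μ n : ℕ} {P : Finset β}

lemma sdiff_small {X Y : Pole D} (hcard : ∀ X, (E X).card = k)
    (h : bad E k S X Y) : (E X \ E Y).card ≤ S - 1 := by
  have h1 := Finset.card_inter_add_card_sdiff (E X) (E Y)
  have h2 : (E X ∩ E Y).card ≤ k := by
    rw [← hcard X]; exact Finset.card_le_card Finset.inter_subset_left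
  rw [hcard X] at h1
  rw [bad] at h
  omega

lemma inter_transfer (X Y Z : Finset β) :
    (X ∩ Y).card ≤ (X ∩ Z).card + (Y \ Z).card := by
  have hsub : X ∩ Y ⊆ (X ∩ Z) ∪ (Y \ Z) := by
    intro a ha
    rw [Finset.mem_inter] at ha
    by_cases hz : a ∈ Z
    · exact Finset.mem_union_left _ (Finset.mem_inter.mpr ⟨ha.1, hz⟩)
    · exact Finset.mem_union_right _ (Finset.mem_sdiff.mpr ⟨ha.2, hz⟩)
  exact le_trans (Finset.card_le_card hsub) (Finset.card_union_le _ _)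

lemma flip_upper {X : Pole D} (hcard : ∀ X, (E X).card = k)
    (hdisj : ∀ X : Pole D, E X ∩ E (ap X) = ∅) (W : Finset β) (hW : W.card = k)
    (hWsub : W ⊆ P) :
    (W ∩ E X).card + (W ∩ E (ap X)).card ≤ k := by
  have hd : Disjoint (W ∩ E X) (W ∩ E (ap X)) := by
    rw [Finset.disjoint_left]
    intro a ha ha'
    have : a ∈ E X ∩ E (ap X) :=
      Finset.mem_inter.mpr ⟨(Finset.mem_inter.mp ha).2, (Finset.mem_inter.mp ha').2⟩
    rw [hdisj X] at this
    exact absurd this (Finset.notMem_empty a)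
  have hsub : (W ∩ E X) ∪ (W ∩ E (ap X)) ⊆ W := by
    intro a ha
    rcases Finset.mem_union.mp ha with h | h
    · exact (Finset.mem_inter.mp h).1
    · exact (Finset.mem_inter.mp h).1
  calc (W ∩ E X).card + (W ∩ E (ap X)).card
      = ((W ∩ E X) ∪ (W ∩ E (ap X))).card := (Finset.card_union_of_disjoint hd).symm
    _ ≤ W.card := Finset.card_le_card hsub
    _ = k := hW

lemma flip_lower {X : Pole D} (hcard : ∀ X, (E X).card = k)
    (hsub : ∀ X, E X ⊆ P) (hn : P.card = n)
    (hdisj : ∀ X : Pole D, E X ∩ E (ap X) = ∅) (hμ : n = 2 * k + μ)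
    (W : Finset β) (hW : W.card = k) (hWsub : W ⊆ P) :
    k ≤ (W ∩ E X).card + (W ∩ E (ap X)).card + μ := by
  have hcov : W ⊆ (W ∩ E X) ∪ (W ∩ E (ap X)) ∪ (P \ (E X ∪ E (ap X))) := by
    intro a ha
    by_cases h1 : a ∈ E X
    · exact Finset.mem_union_left _ (Finset.mem_union_left _ (Finset.mem_inter.mpr ⟨ha, h1⟩))
    · by_cases h2 : a ∈ E (ap X)
      · exact Finset.mem_union_left _ (Finset.mem_union_right _ (Finset.mem_inter.mpr ⟨ha, h2⟩))
      · refine Finset.mem_union_right _ (Finset.mem_sdiff.mpr ⟨hWsub ha, ?_⟩)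
        intro hmem
        rcases Finset.mem_union.mp hmem with h | h
        · exact h1 h
        · exact h2 h
  have hM : (P \ (E X ∪ E (ap X))).card = μ := by
    have hu : (E X ∪ E (ap X)).card = 2 * k := by
      have hd : Disjoint (E X) (E (ap X)) := by
        rw [Finset.disjoint_left]
        intro a ha ha'
        have : a ∈ E X ∩ E (ap X) := Finset.mem_inter.mpr ⟨ha, ha'⟩
        rw [hdisj X] at this
        exact absurd this (Finset.notMem_empty a)
      rw [Finset.card_union_of_disjoint hd, hcard X, hcard (ap X)]
      omega
    have hsubU : E X ∪ E (ap X) ⊆ P := by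
      intro a ha
      rcases Finset.mem_union.mp ha with h | h
      · exact hsub X h
      · exact hsub (ap X) h
    rw [Finset.card_sdiff_of_subset hsubU, hu, hn]
    omega
  calc k = W.card := hW.symm
    _ ≤ ((W ∩ E X) ∪ (W ∩ E (ap X)) ∪ (P \ (E X ∪ E (ap X)))).card :=
        Finset.card_le_card hcov
    _ ≤ ((W ∩ E X) ∪ (W ∩ E (ap X))).card + (P \ (E X ∪ E (ap X))).card :=
        Finset.card_union_le _ _
    _ ≤ (W ∩ E X).card + (W ∩ E (ap X)).card + (P \ (E X ∪ E (ap X))).card := by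
        have := Finset.card_union_le (W ∩ E X) (W ∩ E (ap X))
        omega
    _ = (W ∩ E X).card + (W ∩ E (ap X)).card + μ := by rw [hM]
lemma no_odd_walk
    (hcard : ∀ X : Pole D, (E X).card = k)
    (hsub : ∀ X : Pole D, E X ⊆ P)
    (hn : P.card = n)
    (hdisj : ∀ X : Pole D, E X ∩ E (ap X) = ∅)
    (hμ : n = 2 * k + μ)
    (harith : ∀ a b : ℕ, 1 ≤ a → 1 ≤ b → a + b ≤ 2 * D →
        b * (S - 1) + ((a - 1) / 2) * μ < k) :
    ∀ ℓ (w : ℕ → Pole D × Bool), IsWalk E k S ℓ w →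
      (w ℓ).1 = (w 0).1 → (w ℓ).2 = !(w 0).2 → False := by
  intro ℓ
  induction ℓ using Nat.strong_induction_on with
  | _ ℓ IH =>
  intro w hw hpole hpar
  rcases Nat.eq_zero_or_pos ℓ with rfl | hℓpos
  · simp at hpar
  -- Step A: no pole repeats except the endpoints pair
  have hnorep : ∀ j₁ j₂, j₁ < j₂ → j₂ ≤ ℓ → ¬(j₁ = 0 ∧ j₂ = ℓ) →
      (w j₁).1 ≠ (w j₂).1 := by
    intro j₁ j₂ hlt hle hne heq
    set Δ := j₂ - j₁ with hΔ
    have hΔpos : 1 ≤ Δ := by omega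
    by_cases hpar2 : (w j₂).2 = (w j₁).2
    · -- splice out the closed even segment
      have hQ : w j₂ = w j₁ := Prod.ext heq.symm hpar2
      set w' : ℕ → Pole D × Bool := fun i => if i ≤ j₁ then w i else w (i + Δ) with hw'
      have hw'le : ∀ i, i ≤ j₁ → w' i = w i := by
        intro i hi; simp [hw', hi]
      have hw'gt : ∀ i, ¬(i ≤ j₁) → w' i = w (i + Δ) := by
        intro i hi; simp [hw', hi]
      have hwalk' : IsWalk E k S (ℓ - Δ) w' := by
        intro j hj
        rcases Nat.lt_trichotomy j j₁ with hc | hc | hc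
        · rw [hw'le j (by omega), hw'le (j+1) (by omega)]
          exact hw j (by omega)
        · subst hc
          rw [hw'le j (by omega), hw'gt (j+1) (by omega)]
          have e2 : j + 1 + Δ = j₂ + 1 := by omega
          rw [e2, ← hQ]
          exact hw j₂ (by omega)
        · rw [hw'gt j (by omega), hw'gt (j+1) (by omega)]
          have e2 : j + 1 + Δ = (j + Δ) + 1 := by omega
          rw [e2]
          exact hw (j+Δ) (by omega)
      have hend : w' (ℓ - Δ) = w ℓ := by
        by_cases hc : ℓ - Δ ≤ j₁
        · have hℓj₂ : ℓ = j₂ := by omega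
          have hℓΔ : ℓ - Δ = j₁ := by omega
          rw [hw'le _ hc, hℓΔ, ← hQ, hℓj₂]
        · rw [hw'gt _ hc]
          congr 1
          omega
      have hstart : w' 0 = w 0 := by simp [hw']
      exact IH (ℓ - Δ) (by omega) w' hwalk'
        (by rw [hend, hstart]; exact hpole)
        (by rw [hend, hstart]; exact hpar)
    · -- odd closed subsegment
      have hpar2' : (w j₂).2 = !(w j₁).2 := by
        cases h1 : (w j₁).2 <;> cases h2 : (w j₂).2 <;> simp_all
      have hℓ' : j₂ - j₁ < ℓ := by omega
      exact IH (j₂ - j₁) hℓ' (fun i => w (j₁ + i))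
        (by
          intro j hj
          have e : j₁ + (j + 1) = (j₁ + j) + 1 := by omega
          simp only [e]
          exact hw (j₁ + j) (by omega))
        (by simp only [Nat.add_sub_cancel' (le_of_lt hlt), Nat.add_zero]
            exact heq.symm)
        (by simp only [Nat.add_sub_cancel' (le_of_lt hlt), Nat.add_zero]
            exact hpar2')
  -- Step B: length bound
  have hlen : ℓ ≤ 2 * D := by
    have hinj : Set.InjOn (fun j => (w j).1) (Finset.range ℓ) := by
      intro a ha b hb hab
      simp only [Finset.coe_range, Set.mem_Iio] at ha hb
      by_contra hne
      rcases Nat.lt_trichotomy a b with h | h | h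
      · exact hnorep a b h (by omega) (by omega) hab
      · exact hne h
      · exact hnorep b a h (by omega) (by omega) hab.symm
    have h1 : (Finset.range ℓ).card ≤ Fintype.card (Pole D) :=
      le_trans (Finset.card_le_card_of_injOn _ (fun x _ => Finset.mem_univ _) hinj)
        (le_of_eq (Finset.card_univ))
    have h2 : Fintype.card (Pole D) = D * 2 := by
      simp [Fintype.card_prod]
    rw [Finset.card_range] at h1
    omega
  -- Step C: counters
  set flip : ℕ → Prop := fun i => (w (i+1)).2 = !((w i).2) with hflip
  set A : ℕ → ℕ := fun j => ((Finset.range j).filter flip).card with hA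
  set cost : ℕ → ℕ := fun i => if flip i then (if (w i).2 = !((w 0).2) then μ else 0)
    else (S - 1) with hcost
  set err : ℕ → ℕ := fun j => ∑ i ∈ Finset.range j, cost i with herr
  have hAsucc : ∀ j, A (j+1) = A j + (if flip j then 1 else 0) := by
    intro j
    have hsplit : (Finset.range (j+1)).filter flip
        = if flip j then insert j ((Finset.range j).filter flip)
          else (Finset.range j).filter flip := by
      rw [Finset.range_add_one, Finset.filter_insert]
    simp only [hA, hsplit]
    split_ifs with h
    · rw [Finset.card_insert_of_notMem (by simp)]
    · rfl
  have hAle : ∀ j, A j ≤ j := by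
    intro j
    calc A j ≤ (Finset.range j).card := Finset.card_le_card (Finset.filter_subset _ _)
      _ = j := Finset.card_range j
  have herrsucc : ∀ j, err (j+1) = err j + cost j := by
    intro j
    simp [herr, Finset.sum_range_succ]
  have hnoflip : ∀ j < ℓ, ¬ flip j → (w (j+1)).2 = (w j).2 ∧ bad E k S (w j).1 (w (j+1)).1 := by
    intro j hj hnf
    rcases hw j hj with ⟨h1, h2⟩ | ⟨h1, h2⟩
    · exact absurd h2 hnf
    · exact ⟨h2, h1⟩
  have hyesflip : ∀ j < ℓ, flip j → (w (j+1)).1 = ap ((w j).1) := by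
    intro j hj hf
    rcases hw j hj with ⟨h1, h2⟩ | ⟨h1, h2⟩
    · exact h1
    · rw [hflip] at hf
      rw [h2] at hf
      exact absurd hf (by simp)
  -- parity lemma
  have hparity : ∀ j, j ≤ ℓ → ((w j).2 = (w 0).2 ↔ A j % 2 = 0) := by
    intro j
    induction j with
    | zero => intro _; simp [hA]
    | succ j ihj =>
      intro hjl
      have hj := ihj (by omega)
      have hjlt : j < ℓ := by omega
      by_cases hf : flip j
      · have h1 : (w (j+1)).2 = !((w j).2) := hf
        have h2 : A (j+1) = A j + 1 := by rw [hAsucc j]; rw [if_pos hf]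
        rw [h1, h2]
        have hbne : ((!(w j).2) = (w 0).2) ↔ ¬((w j).2 = (w 0).2) := by
          cases (w j).2 <;> cases (w 0).2 <;> simp
        rw [hbne, hj]
        omega
      · have h1 : (w (j+1)).2 = (w j).2 := (hnoflip j hjlt hf).1
        have h2 : A (j+1) = A j := by rw [hAsucc j]; rw [if_neg hf]; omega
        rw [h1, h2]
        exact hj
  -- at least one bad step
  have hflipsome : A ℓ % 2 = 1 := by
    have := (hparity ℓ le_rfl)
    rw [hpar] at this
    have h2 : ¬((!(w 0).2) = (w 0).2) := by cases hb0 : (w 0).2 <;> simp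
    rcases Nat.mod_two_eq_zero_or_one (A ℓ) with h | h
    · exact absurd (this.mpr h) h2
    · exact h
  have hbadsome : A ℓ < ℓ := by
    rcases Nat.lt_or_ge (A ℓ) ℓ with h | h
    · exact h
    · exfalso
      have hAeq : A ℓ = ℓ := le_antisymm (hAle ℓ) h
      have hallflip : ∀ j < ℓ, flip j := by
        intro j hj
        by_contra hnf
        have hss : (Finset.range ℓ).filter flip ⊂ Finset.range ℓ := by
          refine Finset.ssubset_iff_of_subset (Finset.filter_subset _ _) |>.mpr ?_
          exact ⟨j, Finset.mem_range.mpr hj, by simp [hnf]⟩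
        have := Finset.card_lt_card hss
        rw [Finset.card_range] at this
        simp only [hA] at hAeq
        omega
      -- all antipodal: track the side bit
      have hside : ∀ j, j ≤ ℓ → ((w j).1.2 = (w 0).1.2 ↔ A j % 2 = 0) := by
        intro j
        induction j with
        | zero => intro _; simp [hA]
        | succ j ihj =>
          intro hjl
          have hj := ihj (by omega)
          have hf := hallflip j (by omega)
          have h1 : (w (j+1)).1 = ap ((w j).1) := hyesflip j (by omega) hf
          have h2 : A (j+1) = A j + 1 := by rw [hAsucc j]; rw [if_pos hf]
          rw [h1, h2]
          show (!(w j).1.2) = (w 0).1.2 ↔ _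
          have hbne : ((!(w j).1.2) = (w 0).1.2) ↔ ¬((w j).1.2 = (w 0).1.2) := by
            cases (w j).1.2 <;> cases (w 0).1.2 <;> simp
          rw [hbne, hj]
          omega
      have h1 : A ℓ % 2 = 0 := (hside ℓ le_rfl).mp (by rw [hpole])
      omega
  -- error bound
  have herrbound : ∀ j, j ≤ ℓ → err j ≤ (j - A j) * (S - 1) + (A j / 2) * μ := by
    intro j
    induction j with
    | zero => intro _; simp [herr]
    | succ j ihj =>
      intro hjl
      have hj := ihj (by omega)
      have hjlt : j < ℓ := by omega
      rw [herrsucc j]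
      by_cases hf : flip j
      · have h2 : A (j+1) = A j + 1 := by rw [hAsucc j]; rw [if_pos hf]
        have hcj : cost j = (if (w j).2 = !((w 0).2) then μ else 0) := by
          simp only [hcost]; rw [if_pos hf]
        by_cases hodd : (w j).2 = !((w 0).2)
        · have hAodd : A j % 2 = 1 := by
            have := hparity j (by omega)
            rw [hodd] at this
            have h3 : ¬((!(w 0).2) = (w 0).2) := by cases hb0 : (w 0).2 <;> simp
            rcases Nat.mod_two_eq_zero_or_one (A j) with h | h
            · exact absurd (this.mpr h) h3
            · exact h
          rw [hcj]
          simp only [hodd, if_true]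
          have hAle' := hAle j
          have hd1 : (A j + 1) / 2 = A j / 2 + 1 := by omega
          rw [h2, hd1]
          have hd2 : j + 1 - (A j + 1) = j - A j := by omega
          rw [hd2]
          have hmul : (A j / 2 + 1) * μ = (A j / 2) * μ + μ := by ring
          rw [hmul]
          omega
        · rw [hcj]
          rw [if_neg hodd]
          have hAeven : A j % 2 = 0 := by
            have := hparity j (by omega)
            rcases Nat.mod_two_eq_zero_or_one (A j) with h | h
            · exact h
            · exfalso
              rcases Bool.eq_or_eq_not ((w j).2) ((w 0).2) with hbb | hbb
              · have := this.mp hbb; omega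
              · exact hodd hbb
          have hd1 : (A j + 1) / 2 = A j / 2 := by omega
          rw [h2, hd1]
          have hAle' := hAle j
          have h4 : j + 1 - (A j + 1) = j - A j := by omega
          rw [h4]
          omega
      · have h2 : A (j+1) = A j := by rw [hAsucc j]; rw [if_neg hf]; omega
        have hcj : cost j = S - 1 := by simp only [hcost]; rw [if_neg hf]
        rw [hcj, h2]
        have hAle' := hAle j
        have h4 : j + 1 - A j = (j - A j) + 1 := by omega
        rw [h4]
        have hmul : (j - A j + 1) * (S - 1) = (j - A j) * (S - 1) + (S - 1) := by ring
        rw [hmul]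
        omega
  -- the main invariant
  have hinv : ∀ j, j ≤ ℓ →
      ((w j).2 = (w 0).2 → k ≤ (E ((w 0).1) ∩ E ((w j).1)).card + err j) ∧
      ((w j).2 = !((w 0).2) → (E ((w 0).1) ∩ E ((w j).1)).card ≤ err j) := by
    intro j
    induction j with
    | zero =>
      intro _
      constructor
      · intro _
        rw [Finset.inter_self, hcard]
        simp [herr]
      · intro habs
        exact absurd habs (by cases (w 0).2 <;> simp)
    | succ j ihj =>
      intro hjl
      have hj := ihj (by omega)
      have hjlt : j < ℓ := by omega
      rw [herrsucc j]
      by_cases hf : flip j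
      · have h1 : (w (j+1)).1 = ap ((w j).1) := hyesflip j hjlt hf
        have h2 : (w (j+1)).2 = !((w j).2) := hf
        by_cases hodd : (w j).2 = !((w 0).2)
        · -- odd → even
          have hcj : cost j = μ := by
            simp only [hcost]; rw [if_pos hf, if_pos hodd]
          have hnow : (w (j+1)).2 = (w 0).2 := by
            rw [h2, hodd, Bool.not_not]
          constructor
          · intro _
            have hlow := flip_lower (X := (w j).1) hcard hsub hn hdisj hμ
              (E ((w 0).1)) (hcard _) (hsub _)
            have hup := hj.2 hodd
            rw [h1, hcj]
            omega
          · intro habs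
            rw [hnow] at habs
            exact absurd habs (by cases (w 0).2 <;> simp)
        · -- even → odd
          have heven : (w j).2 = (w 0).2 := by
            rcases Bool.eq_or_eq_not ((w j).2) ((w 0).2) with hbb | hbb
            · exact hbb
            · exact absurd hbb hodd
          have hcj : cost j = 0 := by
            simp only [hcost]; rw [if_pos hf, if_neg hodd]
          have hnow : (w (j+1)).2 = !((w 0).2) := by rw [h2, heven]
          constructor
          · intro habs
            rw [hnow] at habs
            exact absurd habs.symm (by cases (w 0).2 <;> simp)
          · intro _
            have hup := flip_upper (X := (w j).1) hcard hdisj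
              (E ((w 0).1)) (hcard _) (hsub _)
            have hlow := hj.1 heven
            rw [h1, hcj]
            omega
      · obtain ⟨h2, hbadj⟩ := hnoflip j hjlt hf
        have hcj : cost j = S - 1 := by simp only [hcost]; rw [if_neg hf]
        have hsd1 : (E ((w j).1) \ E ((w (j+1)).1)).card ≤ S - 1 :=
          sdiff_small hcard hbadj
        have hsd2 : (E ((w (j+1)).1) \ E ((w j).1)).card ≤ S - 1 :=
          sdiff_small hcard (bad_symm E k S hbadj)
        constructor
        · intro hcur
          have hprev : (w j).2 = (w 0).2 := by rw [← h2, hcur]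
          have hlow := hj.1 hprev
          have htr := inter_transfer (E ((w 0).1)) (E ((w j).1)) (E ((w (j+1)).1))
          rw [hcj]
          omega
        · intro hcur
          have hprev : (w j).2 = !((w 0).2) := by rw [← h2, hcur]
          have hup := hj.2 hprev
          have htr := inter_transfer (E ((w 0).1)) (E ((w (j+1)).1)) (E ((w j).1))
          rw [hcj]
          omega
  -- conclude
  have hfinal := (hinv ℓ le_rfl).2 hpar
  rw [hpole, Finset.inter_self, hcard] at hfinal
  have hbound := herrbound ℓ le_rfl
  have harith' := harith (A ℓ) (ℓ - A ℓ) (by omega) (by omega) (by omega)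
  have hdiv : A ℓ / 2 = (A ℓ - 1) / 2 := by omega
  rw [hdiv] at hbound
  omega


lemma reach_map {α : Type*} [Fintype α] {r : α → α → Prop} {F : α → α}
    (hF : ∀ a b, r a b → r (F a) (F b)) {x y : α} (h : Reach r x y) :
    Reach r (F x) (F y) := by
  have key : ∀ n, ∀ y ∈ reachN r x n, F y ∈ reachN r (F x) n := by
    intro n
    induction n with
    | zero => intro y hy; simp [reachN] at hy ⊢; rw [hy]
    | succ n ih =>
      intro y hy
      rcases Finset.mem_union.mp hy with hy | hy
      · exact subset_nbhd (ih y hy)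
      · simp only [Finset.mem_filter, Finset.mem_univ, true_and] at hy
        obtain ⟨z, hz, hr⟩ := hy
        exact mem_nbhd_of_step (ih z hz) (hF z y hr)
  exact key _ y h

section SigmaMain

variable {β : Type*} {D : ℕ}
variable {E : Pole D → Finset β} {k S μ n : ℕ} {P : Finset β}

lemma sigma_exists
    (hcard : ∀ X : Pole D, (E X).card = k)
    (hsub : ∀ X : Pole D, E X ⊆ P)
    (hn : P.card = n)
    (hdisj : ∀ X : Pole D, E X ∩ E (ap X) = ∅)
    (hμ : n = 2 * k + μ)
    (harith : ∀ a b : ℕ, 1 ≤ a → 1 ≤ b → a + b ≤ 2 * D →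
        b * (S - 1) + ((a - 1) / 2) * μ < k) :
    ∃ σ : Fin D → Bool, ∀ i j : Fin D, ¬ bad E k S (i, σ i) (j, !(σ j)) := by
  classical
  set r : (Pole D × Bool) → (Pole D × Bool) → Prop := dstep E k S with hr
  have hrsymm : ∀ a b, r a b → r b a := fun a b h => dstep_symm E k S h
  have hFpres : ∀ a b : Pole D × Bool, r a b → r (a.1, !a.2) (b.1, !b.2) := by
    rintro a b (⟨h1, h2⟩ | ⟨h1, h2⟩)
    · exact Or.inl ⟨h1, by rw [h2]⟩
    · exact Or.inr ⟨h1, by rw [h2]⟩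
  have hmap : ∀ (u v : Pole D × Bool), Reach r u v → Reach r (u.1, !u.2) (v.1, !v.2) := by
    intro u v h
    exact reach_map (F := fun a => (a.1, !a.2)) (fun a b => hFpres a b) h
  set PR : Pole D → Pole D → Prop := fun X Y => ∃ q, Reach r (X, false) (Y, q) with hPR
  have hPRrefl : ∀ X, PR X X := fun X => ⟨false, reach_refl _⟩
  have hPRsymm : ∀ X Y, PR X Y → PR Y X := by
    rintro X Y ⟨q, h⟩
    cases q with
    | false => exact ⟨false, reach_symm hrsymm h⟩
    | true =>
      have h2 := reach_symm hrsymm h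
      have h3 := hmap (Y, true) (X, false) h2
      exact ⟨true, h3⟩
  have hPRtrans : ∀ X Y Z, PR X Y → PR Y Z → PR X Z := by
    rintro X Y Z ⟨q, h1⟩ ⟨q', h2⟩
    cases q with
    | false => exact ⟨q', reach_trans h1 h2⟩
    | true =>
      have h3 := hmap (Y, false) (Z, q') h2
      exact ⟨!q', reach_trans h1 h3⟩
  have huniq2 : ∀ (Z Y : Pole D) (q q' : Bool), Reach r (Z, false) (Y, q) →
      Reach r (Z, false) (Y, q') → q = q' := by
    intro Z Y q q' h1 h2
    by_contra hne
    have h3 : Reach r (Y, q) (Y, q') := reach_trans (reach_symm hrsymm h1) h2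
    have hq' : q' = !q := by
      cases q <;> cases q' <;>
        first
        | rfl
        | exact absurd rfl hne
        | exact absurd rfl (by simpa using hne)
    rw [hq'] at h3
    have h4 : Reach r (Y, false) (Y, true) := by
      cases q with
      | false => exact h3
      | true => exact hmap (Y, true) (Y, false) h3
    obtain ⟨ℓ, w, hw0, hwl, hstep⟩ := reach_extract h4
    exact no_odd_walk hcard hsub hn hdisj hμ harith ℓ w hstep
      (by rw [hw0, hwl]) (by rw [hw0, hwl]; rfl)
  set pcomp : Pole D → Finset (Pole D) := fun X => Finset.univ.filter (PR X) with hpcomp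
  have hpc_self : ∀ X, X ∈ pcomp X := by
    intro X
    simp only [hpcomp, Finset.mem_filter, Finset.mem_univ, true_and]
    exact hPRrefl X
  have hpc_eq : ∀ X Y, PR X Y → pcomp X = pcomp Y := by
    intro X Y h
    ext z
    simp only [hpcomp, Finset.mem_filter, Finset.mem_univ, true_and]
    exact ⟨fun hz => hPRtrans Y X z (hPRsymm X Y h) hz,
      fun hz => hPRtrans X Y z h hz⟩
  set pickF : Finset (Pole D) → Pole D → Pole D :=
    fun s dflt => if hs : s.Nonempty then Classical.choose hs else dflt with hpickF
  have hpick_eq : ∀ s (a b : Pole D), s.Nonempty → pickF s a = pickF s b := by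
    intro s a b hs
    simp only [hpickF, dif_pos hs]
  have hpick_mem : ∀ s (a : Pole D), s.Nonempty → pickF s a ∈ s := by
    intro s a hs
    simp only [hpickF, dif_pos hs]
    exact Classical.choose_spec hs
  set base : Pole D → Pole D := fun X => pickF (pcomp X) X with hbase
  have hbase_mem : ∀ X, PR X (base X) := by
    intro X
    have := hpick_mem (pcomp X) X ⟨X, hpc_self X⟩
    simp only [hpcomp, Finset.mem_filter, Finset.mem_univ, true_and] at this
    exact this
  have hbase_eq : ∀ X Y, PR X Y → base X = base Y := by
    intro X Y h
    have h1 : pcomp X = pcomp Y := hpc_eq X Y h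
    simp only [hbase]
    rw [h1]
    exact hpick_eq (pcomp Y) X Y ⟨Y, hpc_self Y⟩
  set φ : Pole D → Bool :=
    fun X => if Reach r (base X, false) (X, true) then true else false with hφ
  have hφ_spec : ∀ X, Reach r (base X, false) (X, φ X) := by
    intro X
    by_cases hc : Reach r (base X, false) (X, true)
    · have : φ X = true := by simp [hφ, hc]
      rw [this]; exact hc
    · have hfalse : φ X = false := by simp [hφ, hc]
      rw [hfalse]
      obtain ⟨q, hq⟩ := hPRsymm X (base X) (hbase_mem X)
      cases q with
      | false => exact hq
      | true => exact absurd hq hc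
  have hφ_uniq : ∀ X q, Reach r (base X, false) (X, q) → q = φ X := by
    intro X q h
    exact huniq2 (base X) X q (φ X) h (hφ_spec X)
  have hφ_bad : ∀ X Y, bad E k S X Y → φ Y = φ X := by
    intro X Y hb
    have hstep : r (X, φ X) (Y, φ X) := Or.inr ⟨hb, rfl⟩
    have hstep0 : r (X, false) (Y, false) := Or.inr ⟨hb, rfl⟩
    have hPRXY : PR X Y := ⟨false, reach_step (reach_refl _) hstep0⟩
    have hbeq : base Y = base X := (hbase_eq X Y hPRXY).symm
    have h2 : Reach r (base X, false) (Y, φ X) := reach_step (hφ_spec X) hstep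
    have h3 := hφ_uniq Y (φ X) (by rw [hbeq]; exact h2)
    exact h3.symm
  have hφ_ap : ∀ X, φ (ap X) = !(φ X) := by
    intro X
    have hstep : r (X, φ X) (ap X, !(φ X)) := Or.inl ⟨rfl, rfl⟩
    have hstep0 : r (X, false) (ap X, !false) := Or.inl ⟨rfl, rfl⟩
    have hPRXY : PR X (ap X) := ⟨!false, reach_step (reach_refl _) hstep0⟩
    have hbeq : base (ap X) = base X := (hbase_eq X (ap X) hPRXY).symm
    have h2 : Reach r (base X, false) (ap X, !(φ X)) := reach_step (hφ_spec X) hstep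
    have h3 := hφ_uniq (ap X) (!(φ X)) (by rw [hbeq]; exact h2)
    exact h3.symm
  refine ⟨fun i => φ (i, true), ?_⟩
  intro i j hb
  have hsel : ∀ i : Fin D, φ (i, φ (i, true)) = true := by
    intro i
    cases h : φ (i, true) with
    | true => rw [h]
    | false =>
      have : φ (i, false) = !(φ (i, true)) := hφ_ap (i, true)
      rw [this, h]
      rfl
  have hanti : ∀ j : Fin D, φ (j, !(φ (j, true))) = false := by
    intro j
    have : φ (j, !(φ (j, true))) = !(φ (j, φ (j, true))) := hφ_ap (j, φ (j, true))
    rw [this, hsel j]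
    rfl
  have := hφ_bad _ _ hb
  rw [hsel i, hanti j] at this
  exact absurd this (by simp)

end SigmaMain


end Sigma


lemma two_d_le : ∀ d : ℕ, 2 * d ≤ 3 ^ (d - 1) + 1 := by
  intro d
  induction d with
  | zero => simp
  | succ d ih =>
    rcases Nat.eq_zero_or_pos d with rfl | hd
    · simp
    · have h1 : d - 1 + 1 = d := by omega
      have h3 : (3:ℕ) ^ d = 3 * 3 ^ (d - 1) := by
        conv_lhs => rw [← h1]
        rw [pow_succ']
      have h4 : (1:ℕ) ≤ 3 ^ (d-1) := Nat.one_le_pow _ _ (by norm_num)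
      simp only [Nat.add_sub_cancel]
      omega

set_option maxHeartbeats 1000000 in
lemma caseII {d : ℕ} (P : Finset (Pt d)) (n : ℕ) (hn : P.card = n)
    (hgp : ∀ p ∈ P, ∀ q ∈ P, p ≠ q → ∀ i, p i ≠ q i)
    (ε₁ ε₂ : ℝ) (hε₁ : 0 < ε₁) (hε₁₂ : ε₁ ≤ ε₂)
    (hlow : ε₁ ≥ (3 : ℝ) ^ (d - 1) / (2 * (3 : ℝ) ^ (d - 1) + 1))
    (hsum : ε₁ + ε₂ ≥ 1)
    (hcase : 2 * ⌊ε₁ * n⌋₊ + 2 ≤ n) :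
    ∃ p₁ p₂ : Pt d,
      (∀ B : Set (Pt d), IsBox B → (ptsIn P B : ℝ) > ε₁ * n → p₁ ∈ B ∨ p₂ ∈ B) ∧
      (∀ B : Set (Pt d), IsBox B → (ptsIn P B : ℝ) > ε₂ * n → p₁ ∈ B ∧ p₂ ∈ B) := by
  classical
  letI : DecidableEq (Pt d) := fun a b => Classical.propDecidable (a = b)
  set K₀ := ⌊ε₁ * n⌋₊ with hK₀
  set k := ⌈ε₁ * n⌉₊ with hk
  set m := 3 ^ (d - 1) with hm
  have hnpos : 2 ≤ n := by omega
  have hεn_pos : (0:ℝ) < ε₁ * n := by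
    have : (0:ℝ) < n := by exact_mod_cast (by omega : 0 < n)
    positivity
  have hkpos : 1 ≤ k := by
    rw [hk]
    by_contra h
    have h0 : ⌈ε₁ * ↑n⌉₊ = 0 := by omega
    have := Nat.ceil_eq_zero.mp h0
    linarith
  have hfloor_le : (K₀ : ℝ) ≤ ε₁ * n := Nat.floor_le (le_of_lt hεn_pos)
  have hle_ceil : ε₁ * n ≤ (k : ℝ) := Nat.le_ceil _
  have hkK : k ≤ K₀ + 1 := Nat.ceil_le_floor_add_one _
  have hKk : K₀ ≤ k := Nat.floor_le_ceil _
  have h2k : 2 * k ≤ n := by omega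
  have hfloor_lt : ε₁ * n < (K₀ : ℝ) + 1 := Nat.lt_floor_add_one _
  have hmpos : 1 ≤ m := Nat.one_le_pow _ _ (by norm_num)
  have hmd : 2 * d ≤ m + 1 := two_d_le d
  have hmcast : ((m : ℕ) : ℝ) = (3:ℝ) ^ (d - 1) := by
    rw [hm]; push_cast; ring
  have hml : (m : ℝ) * ((n:ℝ) - 2 * (ε₁ * n)) ≤ ε₁ * n := by
    have h2m1 : (0:ℝ) < 2 * (3:ℝ) ^ (d-1) + 1 := by positivity
    rw [ge_iff_le, div_le_iff₀ h2m1] at hlow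
    rw [hmcast]
    nlinarith
  have hcoordinj : ∀ (X : Pole d), ∀ x ∈ P, ∀ y ∈ P, x ≠ y →
      (if X.2 then -(x X.1) else x X.1) ≠ (if X.2 then -(y X.1) else y X.1) := by
    intro X x hx y hy hxy
    have hne := hgp x hx y hy hxy X.1
    cases X.2 <;> simp only [if_true, if_false]
    · exact hne
    · intro h; apply hne; linarith
  have hos : ∀ X : Pole d, ∃ (E : Finset (Pt d)) (τ : ℝ), E ⊆ P ∧ E.card = k ∧
      (P.filter (fun x => (if X.2 then -(x X.1) else x X.1) < τ)).card = k - 1 ∧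
      P.filter (fun x => τ < (if X.2 then -(x X.1) else x X.1)) = P \ E := by
    intro X
    exact order_stat P (fun z : Pt d => if X.2 then -(z X.1) else z X.1)
      (fun x hx y hy hxy => hcoordinj X x hx y hy hxy) k hkpos (by rw [hn]; omega)
  choose ES τ hEsub hEcard hsmall hbig using hos
  set θ : Pole d → ℝ := fun X => if X.2 then -(τ X) else τ X with hθ
  set SS : Pole d → Bool → Finset (Pt d) := fun X s =>
    P.filter (fun x => if s then θ X < x X.1 else x X.1 < θ X) with hSS
  have hmemT : ∀ (X : Pole d) (x : Pt d), x ∈ P → (x ∈ SS X true ↔ θ X < x X.1) := by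
    intro X x hx
    simp [hSS, hx]
  have hmemF : ∀ (X : Pole d) (x : Pt d), x ∈ P → (x ∈ SS X false ↔ x X.1 < θ X) := by
    intro X x hx
    simp [hSS, hx]
  have hθT : ∀ (X : Pole d), X.2 = true → θ X = -(τ X) := by
    intro X hX; simp [hθ, hX]
  have hθF : ∀ (X : Pole d), X.2 = false → θ X = τ X := by
    intro X hX; simp [hθ, hX]
  have hSS_small : ∀ X : Pole d, (SS X X.2).card = k - 1 := by
    intro X
    rw [← hsmall X]
    apply congrArg
    apply Finset.filter_congr
    intro x hx
    cases hx2 : X.2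
    · rw [hθF X hx2]
      simp
    · rw [hθT X hx2]
      simp [neg_lt]
  have hSS_big : ∀ X : Pole d, SS X (!X.2) = P \ ES X := by
    intro X
    rw [← hbig X]
    apply Finset.filter_congr
    intro x hx
    cases hx2 : X.2
    · rw [hθF X hx2]
      simp
    · rw [hθT X hx2]
      simp [lt_neg]
  have hEchar : ∀ (X : Pole d) (y : Pt d), y ∈ P → (y ∈ ES X ↔ y ∉ SS X (!X.2)) := by
    intro X y hy
    rw [hSS_big X]
    simp only [Finset.mem_sdiff, hy, true_and]
    tauto
  have hdisj : ∀ X : Pole d, ES X ∩ ES (ap X) = ∅ := by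
    intro X
    by_contra hne
    obtain ⟨x, hx⟩ := Finset.nonempty_iff_ne_empty.mpr hne
    rw [Finset.mem_inter] at hx
    have hxP : x ∈ P := hEsub X hx.1
    have hcov : P ⊆ ES X ∪ ES (ap X) := by
      intro y hy
      by_contra hyn
      rw [Finset.mem_union] at hyn
      push_neg at hyn
      have hy1 : y ∈ SS X (!X.2) := by
        by_contra h
        exact hyn.1 ((hEchar X y hy).mpr h)
      have hy2 : y ∈ SS (ap X) (!(ap X).2) := by
        by_contra h
        exact hyn.2 ((hEchar (ap X) y hy).mpr h)
      have hx1 : x ∉ SS X (!X.2) := fun h => ((hEchar X x hxP).mp hx.1) h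
      have hx2 : x ∉ SS (ap X) (!(ap X).2) := fun h => ((hEchar (ap X) x hxP).mp hx.2) h
      have hap1 : (ap X).1 = X.1 := rfl
      cases hb : X.2
      · rw [hb, Bool.not_false] at hy1 hx1
        have hb2 : (ap X).2 = true := by simp [ap, hb]
        rw [hb2, Bool.not_true] at hy2 hx2
        rw [hmemT X y hy] at hy1
        rw [hmemF (ap X) y hy, hap1] at hy2
        rw [hmemT X x hxP] at hx1
        rw [hmemF (ap X) x hxP, hap1] at hx2
        push_neg at hx1 hx2
        linarith
      · rw [hb, Bool.not_true] at hy1 hx1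
        have hb2 : (ap X).2 = false := by simp [ap, hb]
        rw [hb2, Bool.not_false] at hy2 hx2
        rw [hmemF X y hy] at hy1
        rw [hmemT (ap X) y hy, hap1] at hy2
        rw [hmemF X x hxP] at hx1
        rw [hmemT (ap X) x hxP, hap1] at hx2
        push_neg at hx1 hx2
        linarith
    have hcard2 : n ≤ (ES X ∪ ES (ap X)).card := by
      rw [← hn]; exact Finset.card_le_card hcov
    have hcui := Finset.card_union_add_card_inter (ES X) (ES (ap X))
    have hone : 1 ≤ (ES X ∩ ES (ap X)).card :=
      Finset.card_pos.mpr ⟨x, Finset.mem_inter.mpr hx⟩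
    rw [hEcard X, hEcard (ap X)] at hcui
    omega
  set μ := n - 2 * k with hμdef
  set S := n - k - K₀ with hSdef
  have hμcast : (μ : ℝ) = (n:ℝ) - 2 * (k:ℝ) := by
    rw [hμdef, Nat.cast_sub h2k]
    push_cast
    ring
  have hmμ : (m:ℝ) * (μ:ℝ) ≤ ε₁ * n := by
    have hstep : (μ:ℝ) ≤ (n:ℝ) - 2*(ε₁*n) := by rw [hμcast]; linarith
    have h0 : (0:ℝ) ≤ (m:ℝ) := Nat.cast_nonneg m
    calc (m:ℝ) * (μ:ℝ) ≤ (m:ℝ) * ((n:ℝ) - 2*(ε₁*n)) := by nlinarith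
      _ ≤ ε₁ * n := hml
  have hmuS : ∀ a b : ℕ, 1 ≤ a → 1 ≤ b → a + b ≤ 2 * d →
      b * (S - 1) + ((a - 1) / 2) * μ < k := by
    intro a b ha hb hab
    set c := (a - 1) / 2 with hc
    have hcle : b + c ≤ m := by
      have h1 : c ≤ a - 1 := Nat.div_le_self _ _
      omega
    rcases Nat.lt_or_ge K₀ k with hlt | hge
    · -- k = K₀ + 1
      have hkk : k = K₀ + 1 := by omega
      have hS1 : S - 1 = μ := by omega
      have hmun : m * μ < k := by
        have hcast : ((m * μ : ℕ) : ℝ) < (k:ℝ) := by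
          push_cast
          calc (m:ℝ) * μ ≤ ε₁ * n := hmμ
            _ < (K₀:ℝ) + 1 := hfloor_lt
            _ = (k:ℝ) := by rw [hkk]; push_cast; ring
        exact_mod_cast hcast
      have e1 : b * μ + c * μ = (b + c) * μ := by ring
      have e3 : (b + c) * μ ≤ m * μ := Nat.mul_le_mul_right _ hcle
      rw [hS1]
      omega
    · -- k = K₀, so ε₁ n = k exactly
      have hkk : k = K₀ := by omega
      have hkreal : (k:ℝ) = ε₁ * n := by
        have h1 : (k:ℝ) ≤ ε₁ * n := by rw [hkk]; exact hfloor_le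
        linarith
      have hmun : m * μ ≤ k := by
        have hcast : ((m * μ : ℕ) : ℝ) ≤ (k:ℝ) := by
          push_cast
          rw [hkreal]
          exact hmμ
        exact_mod_cast hcast
      have hS2 : S = μ := by omega
      rcases Nat.eq_zero_or_pos μ with hμ0 | hμpos
      · rw [hS2, hμ0]
        omega
      · obtain ⟨μ', hμ'⟩ : ∃ μ', μ = μ' + 1 := ⟨μ - 1, by omega⟩
        have hS3 : S - 1 = μ' := by omega
        rw [hS3, hμ']
        have eB : c * (μ' + 1) = c * μ' + c := by ring
        have eC : (b + c) * (μ' + 1) = b * μ' + c * μ' + b + c := by ring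
        have eD : (b + c) * (μ' + 1) ≤ m * (μ' + 1) := Nat.mul_le_mul_right _ hcle
        have eE : m * (μ' + 1) ≤ k := by rw [← hμ']; exact hmun
        omega
  obtain ⟨σ, hσ⟩ := sigma_exists (E := ES) (k := k) (S := S) (μ := μ) (n := n) (P := P)
    hEcard hEsub hn hdisj (by omega) hmuS
  -- counting bounds
  have hbigcard : ∀ X : Pole d, (SS X (!X.2)).card = n - k := by
    intro X
    rw [hSS_big X, Finset.card_sdiff_of_subset (hEsub X), hn, hEcard X]
  have hnotside : ∀ (X : Pole d) (s : Bool), s ≠ X.2 → s = !X.2 := by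
    intro X s h
    cases s <;> cases hx : X.2 <;> simp_all
  have hpair : ∀ (i j : Fin d) (s₁ s₂ : Bool),
      (SS (i, σ i) s₁ ∩ SS (j, !(σ j)) s₂).card ≤ K₀ := by
    intro i j s₁ s₂
    by_cases h1 : s₁ = (i, σ i).2
    · calc (SS (i, σ i) s₁ ∩ SS (j, !(σ j)) s₂).card
          ≤ (SS (i, σ i) s₁).card := Finset.card_le_card Finset.inter_subset_left
        _ = k - 1 := by rw [h1, hSS_small]
        _ ≤ K₀ := by omega
    · by_cases h2 : s₂ = (j, !(σ j)).2
      · calc (SS (i, σ i) s₁ ∩ SS (j, !(σ j)) s₂).card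
            ≤ (SS (j, !(σ j)) s₂).card := Finset.card_le_card Finset.inter_subset_right
          _ = k - 1 := by rw [h2, hSS_small]
          _ ≤ K₀ := by omega
      · rw [hnotside _ _ h1, hnotside _ _ h2, hSS_big, hSS_big]
        have hint : (P \ ES (i, σ i)) ∩ (P \ ES (j, !(σ j)))
            = P \ (ES (i, σ i) ∪ ES (j, !(σ j))) := by
          ext z
          simp only [Finset.mem_inter, Finset.mem_sdiff, Finset.mem_union]
          tauto
        rw [hint]
        have hsubU : ES (i, σ i) ∪ ES (j, !(σ j)) ⊆ P := by
          intro z hz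
          rcases Finset.mem_union.mp hz with h | h
          · exact hEsub _ h
          · exact hEsub _ h
        rw [Finset.card_sdiff_of_subset hsubU, hn]
        have hcui := Finset.card_union_add_card_inter (ES (i, σ i)) (ES (j, !(σ j)))
        rw [hEcard, hEcard] at hcui
        have hnb := hσ i j
        rw [bad] at hnb
        push_neg at hnb
        omega
  have hK0r : (K₀ : ℝ) ≤ ε₁ * n := hfloor_le
  have hsingle : ∀ (X : Pole d) (s : Bool), ((SS X s).card : ℝ) ≤ ε₂ * n := by
    intro X s
    have hε₂n : ε₁ * n ≤ ε₂ * n := by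
      have : (0:ℝ) ≤ n := Nat.cast_nonneg n
      nlinarith
    by_cases h1 : s = X.2
    · rw [h1, hSS_small]
      have : ((k - 1 : ℕ) : ℝ) ≤ (K₀ : ℝ) := by exact_mod_cast (by omega : k - 1 ≤ K₀)
      linarith
    · rw [hnotside _ _ h1, hbigcard]
      have hc : ((n - k : ℕ) : ℝ) = (n:ℝ) - (k:ℝ) := by
        rw [Nat.cast_sub (by omega : k ≤ n)]
      rw [hc]
      have : (n:ℝ) - (k:ℝ) ≤ (n:ℝ) - ε₁ * n := by linarith
      have h2 : (n:ℝ) - ε₁ * n ≤ ε₂ * n := by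
        have hn0 : (0:ℝ) ≤ n := Nat.cast_nonneg n
        nlinarith
      linarith
  -- the two net points
  refine ⟨WithLp.toLp 2 (fun i => θ (i, σ i) : Fin d → ℝ), WithLp.toLp 2 (fun i => θ (i, !(σ i)) : Fin d → ℝ), ?_, ?_⟩
  · rintro B ⟨a, b, rfl⟩ hcount
    have hcount' : (ptsIn P (box a b) : ℝ) > ε₁ * n := hcount
    by_contra hnot
    push_neg at hnot
    obtain ⟨hm1, hm2⟩ := hnot
    obtain ⟨i, hi⟩ := not_mem_box hm1
    obtain ⟨j, hj⟩ := not_mem_box hm2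
    -- sides
    have hside1 : ∃ s₁, ∀ x ∈ P, x ∈ box a b → x ∈ SS (i, σ i) s₁ := by
      rcases hi with hi | hi
      · refine ⟨true, fun x hx hxB => ?_⟩
        exact (hmemT _ x hx).mpr (lt_of_lt_of_le hi (hxB i).1)
      · refine ⟨false, fun x hx hxB => ?_⟩
        exact (hmemF _ x hx).mpr (lt_of_le_of_lt (hxB i).2 hi)
    have hside2 : ∃ s₂, ∀ x ∈ P, x ∈ box a b → x ∈ SS (j, !(σ j)) s₂ := by
      rcases hj with hj | hj
      · refine ⟨true, fun x hx hxB => ?_⟩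
        exact (hmemT _ x hx).mpr (lt_of_lt_of_le hj (hxB j).1)
      · refine ⟨false, fun x hx hxB => ?_⟩
        exact (hmemF _ x hx).mpr (lt_of_le_of_lt (hxB j).2 hj)
    obtain ⟨s₁, hs₁⟩ := hside1
    obtain ⟨s₂, hs₂⟩ := hside2
    have hle : ptsIn P (box a b) ≤ (SS (i, σ i) s₁ ∩ SS (j, !(σ j)) s₂).card := by
      rw [ptsIn_eq_card]
      apply Finset.card_le_card
      intro x hx
      rw [Finset.mem_filter] at hx
      exact Finset.mem_inter.mpr ⟨hs₁ x hx.1 hx.2, hs₂ x hx.1 hx.2⟩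
    have hleK := le_trans hle (hpair i j s₁ s₂)
    have hfin : (ptsIn P (box a b) : ℝ) ≤ (K₀ : ℝ) := by exact_mod_cast hleK
    linarith [hcount', hfin, hK0r]
  · rintro B ⟨a, b, rfl⟩ hcount
    have hcount' : (ptsIn P (box a b) : ℝ) > ε₂ * n := hcount
    have hε₂big : ε₁ * n ≤ ε₂ * n := by
      have : (0:ℝ) ≤ n := Nat.cast_nonneg n
      nlinarith
    constructor
    · by_contra hm1
      obtain ⟨i, hi⟩ := not_mem_box hm1
      have hside1 : ∃ s₁, ∀ x ∈ P, x ∈ box a b → x ∈ SS (i, σ i) s₁ := by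
        rcases hi with hi | hi
        · refine ⟨true, fun x hx hxB => ?_⟩
          simp only [hSS, Finset.mem_filter, if_true]
          exact ⟨hx, lt_of_lt_of_le hi (hxB i).1⟩
        · refine ⟨false, fun x hx hxB => ?_⟩
          simp only [hSS, Finset.mem_filter, if_false]
          exact ⟨hx, lt_of_le_of_lt (hxB i).2 hi⟩
      obtain ⟨s₁, hs₁⟩ := hside1
      have hle : ptsIn P (box a b) ≤ (SS (i, σ i) s₁).card := by
        rw [ptsIn_eq_card]
        apply Finset.card_le_card
        intro x hx
        rw [Finset.mem_filter] at hx
        exact hs₁ x hx.1 hx.2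
      have hfin : (ptsIn P (box a b) : ℝ) ≤ ((SS (i, σ i) s₁).card : ℝ) := by exact_mod_cast hle
      have hfin2 := le_trans hfin (hsingle _ _)
      linarith [hcount', hfin2]
    · by_contra hm2
      obtain ⟨j, hj⟩ := not_mem_box hm2
      have hside2 : ∃ s₂, ∀ x ∈ P, x ∈ box a b → x ∈ SS (j, !(σ j)) s₂ := by
        rcases hj with hj | hj
        · refine ⟨true, fun x hx hxB => ?_⟩
          simp only [hSS, Finset.mem_filter, if_true]
          exact ⟨hx, lt_of_lt_of_le hj (hxB j).1⟩
        · refine ⟨false, fun x hx hxB => ?_⟩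
          simp only [hSS, Finset.mem_filter, if_false]
          exact ⟨hx, lt_of_le_of_lt (hxB j).2 hj⟩
      obtain ⟨s₂, hs₂⟩ := hside2
      have hle : ptsIn P (box a b) ≤ (SS (j, !(σ j)) s₂).card := by
        rw [ptsIn_eq_card]
        apply Finset.card_le_card
        intro x hx
        rw [Finset.mem_filter] at hx
        exact hs₂ x hx.1 hx.2
      have hfin : (ptsIn P (box a b) : ℝ) ≤ ((SS (j, !(σ j)) s₂).card : ℝ) := by exact_mod_cast hle
      have hfin2 := le_trans hfin (hsingle _ _)
      linarith [hcount', hfin2]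


end WNB


/-- weighted ε-nets of size 2 for axis-parallel boxes in `ℝ^d`,
provided `ε₁ ≥ 3^{d-1}/(2·3^{d-1}+1)` and `ε₁ + ε₂ ≥ 1`. -/
theorem weighted_net_boxes {d : ℕ} (P : Finset (EuclideanSpace ℝ (Fin d)))
    (n : ℕ) (hn : P.card = n) (hgp : GeneralPositionBoxes P)
    (ε₁ ε₂ : ℝ) (hε₁ : 0 < ε₁) (hε₁₂ : ε₁ ≤ ε₂) (hε₂ : ε₂ < 1)
    (hlow : ε₁ ≥ (3 : ℝ) ^ (d - 1) / (2 * (3 : ℝ) ^ (d - 1) + 1))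
    (hsum : ε₁ + ε₂ ≥ 1) :
    ∃ p₁ p₂ : EuclideanSpace ℝ (Fin d),
      (∀ B : Set (EuclideanSpace ℝ (Fin d)), IsBox B →
        (ptsIn P B : ℝ) > ε₁ * n → p₁ ∈ B ∨ p₂ ∈ B) ∧
      (∀ B : Set (EuclideanSpace ℝ (Fin d)), IsBox B →
        (ptsIn P B : ℝ) > ε₂ * n → p₁ ∈ B ∧ p₂ ∈ B) := by
  rcases le_or_gt n (2 * ⌊ε₁ * n⌋₊ + 1) with hc | hc
  · exact WNB.helly_case P n hn ε₁ ε₂ (le_of_lt hε₁) hε₁₂ hc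
  · exact WNB.caseII P n hn hgp ε₁ ε₂ hε₁ hε₁₂ hlow hsum (by omega)

end
end
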